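/- arXiv:2309.09613 — 5 statements merged into one kernel-verified Lean document; each statement's English description precedes it below -/
import Mathlib

section
/- Let $n$ and $s \ge 2$ be integers and let $1 = q_1 \le q_2 \le \cdots \le q_{s-1} \le q_s = n$ be integers. Then $\prod_{\ell=1}^{s-1} \max\left(1, \frac{1}{\sigma_\ell \tau_\ell}\right) > \frac{n}{4^s}$. -/
/-- `σ_ℓ := ∑_{i=1}^{ℓ} q_i`, viewed as a real number. -/
noncomputable def sigmaQ (q : ℕ → ℕ) (ℓ : ℕ) : ℝ := ∑ i ∈ Finset.Icc 1 ℓ, (q i : ℝ)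

/-- `τ_ℓ := ∑_{i=ℓ+1}^{s} 1/q_i`, viewed as a real number. -/
noncomputable def tauQ (q : ℕ → ℕ) (s ℓ : ℕ) : ℝ := ∑ i ∈ Finset.Icc (ℓ + 1) s, (1 : ℝ) / q i

set_option maxHeartbeats 1600000

theorem stmt_0 (n s : ℕ) (hs : 2 ≤ s) (q : ℕ → ℕ)
    (hq1 : q 1 = 1) (hqs : q s = n)
    (hmono : ∀ i j, 1 ≤ i → i ≤ j → j ≤ s → q i ≤ q j) :
    (n : ℝ) / 4 ^ s <
      ∏ ℓ ∈ Finset.Icc 1 (s - 1), max 1 (1 / (sigmaQ q ℓ * tauQ q s ℓ)) := by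
  classical
  set σ : ℕ → ℝ := sigmaQ q with hσdef
  set τ : ℕ → ℝ := tauQ q s with hτdef
  -- basic facts about q
  have hq_one : ∀ i, 1 ≤ i → i ≤ s → 1 ≤ q i := by
    intro i h1 h2
    calc 1 = q 1 := hq1.symm
    _ ≤ q i := hmono 1 i le_rfl h1 h2
  have hq_posR : ∀ i, 1 ≤ i → i ≤ s → (0:ℝ) < q i := by
    intro i h1 h2
    exact_mod_cast Nat.lt_of_lt_of_le Nat.zero_lt_one (hq_one i h1 h2)
  -- sigma facts
  have hσ_succ : ∀ ℓ : ℕ, σ (ℓ+1) = σ ℓ + q (ℓ+1) := by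
    intro ℓ
    simp only [hσdef, sigmaQ]
    rw [Finset.sum_Icc_succ_top (by omega : 1 ≤ ℓ + 1)]
  have hσ_mono : ∀ a b : ℕ, a ≤ b → σ a ≤ σ b := by
    intro a b hab
    apply Finset.sum_le_sum_of_subset_of_nonneg (Finset.Icc_subset_Icc_right hab)
    intros; positivity
  have hσ1 : σ 1 = 1 := by simp [hσdef, sigmaQ, hq1]
  have hσ_pos : ∀ ℓ, 1 ≤ ℓ → (0:ℝ) < σ ℓ := by
    intro ℓ h
    have := hσ_mono 1 ℓ h
    rw [hσ1] at this; linarith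
  have hnσ : (n:ℝ) ≤ σ s := by
    have : (q s : ℝ) ≤ σ s := by
      apply Finset.single_le_sum (f := fun i => (q i : ℝ))
      · intros; positivity
      · simp [Finset.mem_Icc]; omega
    rw [hqs] at this; exact this
  have hn1 : (1:ℝ) ≤ (n:ℝ) := by
    have := hq_one s (by omega) le_rfl
    rw [hqs] at this; exact_mod_cast this
  -- tau facts
  have hτ_pos : ∀ ℓ, ℓ < s → 0 < τ ℓ := by
    intro ℓ hℓ
    have h1 : (0:ℝ) < 1 / q s := by
      have := hq_posR s (by omega) le_rfl; positivity
    apply lt_of_lt_of_le h1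
    apply Finset.single_le_sum (f := fun i => (1:ℝ) / q i)
    · intros; positivity
    · simp [Finset.mem_Icc]; omega
  -- the constant L
  set L : ℝ := 2 * Real.sqrt 2 with hLdef
  have hs2 : Real.sqrt 2 * Real.sqrt 2 = 2 := Real.mul_self_sqrt (by norm_num)
  have hs2nn : (0:ℝ) ≤ Real.sqrt 2 := Real.sqrt_nonneg 2
  have hs2lb : (1.414213:ℝ) < Real.sqrt 2 := by nlinarith [hs2, hs2nn]
  have hs2ub : Real.sqrt 2 < 1.4142136 := by nlinarith [hs2, hs2nn]
  have hL_gt : (2.828426:ℝ) < L := by rw [hLdef]; linarith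
  have hL_lt : L < 2.8284272 := by rw [hLdef]; linarith
  have hL1 : (1:ℝ) < L := by linarith
  have hLpos : (0:ℝ) < L := by linarith
  have hLm1 : (0:ℝ) < L - 1 := by linarith
  have hLsqrt2 : L * Real.sqrt 2 = 4 := by rw [hLdef, mul_assoc, hs2]; norm_num
  -- the jump set S
  set S : Finset ℕ := (Finset.Icc 1 (s-1)).filter (fun ℓ => L * σ ℓ < σ (ℓ+1)) with hSdef
  have hS_mem : ∀ ℓ ∈ S, (1 ≤ ℓ ∧ ℓ ≤ s - 1) ∧ L * σ ℓ < σ (ℓ+1) := by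
    intro ℓ hℓ
    rw [hSdef, Finset.mem_filter, Finset.mem_Icc] at hℓ
    exact hℓ
  -- counting function
  set cnt : ℕ → ℕ → ℕ := fun ℓ i => ((S.filter (fun m => ℓ < m ∧ m < i)).card) with hcntdef
  clear_value σ τ
  -- max split lemma
  have hmax_split : ∀ ℓ i : ℕ, (S.filter (fun m => ℓ < m ∧ m < i)).Nonempty →
      ∃ m', m' ∈ S ∧ ℓ < m' ∧ m' < i ∧ cnt ℓ i = cnt ℓ m' + 1 := by
    intro ℓ i hne
    set F := S.filter (fun m => ℓ < m ∧ m < i) with hF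
    set m' := F.max' hne with hm'
    have hm'F : m' ∈ F := F.max'_mem hne
    rw [hF, Finset.mem_filter] at hm'F
    refine ⟨m', hm'F.1, hm'F.2.1, hm'F.2.2, ?_⟩
    have hkey : F = insert m' (S.filter (fun m => ℓ < m ∧ m < m')) := by
      ext x
      simp only [hF, Finset.mem_insert, Finset.mem_filter]
      constructor
      · rintro ⟨hxS, hx1, hx2⟩
        rcases eq_or_lt_of_le (F.le_max' x (by rw [hF, Finset.mem_filter]; exact ⟨hxS, hx1, hx2⟩)) with h | h
        · left; exact h
        · right; exact ⟨hxS, hx1, h⟩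
      · rintro (rfl | ⟨hxS, hx1, hx2⟩)
        · exact ⟨hm'F.1, hm'F.2.1, hm'F.2.2⟩
        · exact ⟨hxS, hx1, lt_trans hx2 hm'F.2.2⟩
    have hnotmem : m' ∉ S.filter (fun m => ℓ < m ∧ m < m') := by
      simp [Finset.mem_filter]
    simp only [hcntdef]
    rw [← hF, hkey, Finset.card_insert_of_notMem hnotmem]
  -- chain lemma C
  have lemC : ∀ m, m ∈ S → ∀ ℓ, ℓ ∈ S → ℓ < m → L ^ (cnt ℓ m) * σ (ℓ+1) ≤ σ m := by
    intro m
    induction m using Nat.strong_induction_on with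
    | _ m ih =>
      intro hmS ℓ hℓS hlt
      rcases (S.filter (fun x => ℓ < x ∧ x < m)).eq_empty_or_nonempty with hF | hne
      · have hc0 : cnt ℓ m = 0 := by simp only [hcntdef]; rw [hF]; simp
        rw [hc0, pow_zero, one_mul]
        exact hσ_mono (ℓ+1) m hlt
      · obtain ⟨m', hm'S, h1, h2, hc⟩ := hmax_split ℓ m hne
        have hIH : L ^ (cnt ℓ m') * σ (ℓ+1) ≤ σ m' := ih m' h2 hm'S ℓ hℓS h1
        have hjump : L * σ m' < σ (m'+1) := (hS_mem m' hm'S).2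
        have hmono2 : σ (m'+1) ≤ σ m := hσ_mono _ _ h2
        calc L ^ (cnt ℓ m) * σ (ℓ+1) = L * (L ^ (cnt ℓ m') * σ (ℓ+1)) := by
              rw [hc, pow_succ]; ring
        _ ≤ L * σ m' := by
              apply mul_le_mul_of_nonneg_left hIH hLpos.le
        _ ≤ σ (m'+1) := hjump.le
        _ ≤ σ m := hmono2
  -- key: jump gives lower bound on q
  have hkeyq : ∀ a, a ∈ S → (1 - 1/L) * σ (a+1) ≤ (q (a+1) : ℝ) := by
    intro a haS
    have hjump : L * σ a < σ (a+1) := (hS_mem a haS).2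
    have hss := hσ_succ a
    have hσa1pos : 0 < σ (a+1) := hσ_pos _ (by omega)
    have hinv : L * (1/L) = 1 := by field_simp
    nlinarith [hσ_pos a (hS_mem a haS).1.1]
  -- lemma P : lower bound on q i
  have lemP : ∀ ℓ, ℓ ∈ S → ∀ i, ℓ < i → i ≤ s →
      (1 - 1/L) * (L ^ (cnt ℓ i) * σ (ℓ+1)) ≤ (q i : ℝ) := by
    intro ℓ hℓS i hℓi his
    have hℓmem := (hS_mem ℓ hℓS).1
    rcases (S.filter (fun x => ℓ < x ∧ x < i)).eq_empty_or_nonempty with hF | hne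
    · have hc0 : cnt ℓ i = 0 := by simp only [hcntdef]; rw [hF]; simp
      rw [hc0, pow_zero, one_mul]
      have h1 : (q (ℓ+1):ℝ) ≤ q i := by
        exact_mod_cast hmono (ℓ+1) i (by omega) hℓi his
      exact le_trans (hkeyq ℓ hℓS) h1
    · obtain ⟨m', hm'S, h1, h2, hc⟩ := hmax_split ℓ i hne
      have hIH := lemC m' hm'S ℓ hℓS h1
      have hq1' : (q (m'+1):ℝ) ≤ q i := by
        exact_mod_cast hmono (m'+1) i (by omega) h2 his
      have h2' := hkeyq m' hm'S
      have hjump : L * σ m' < σ (m'+1) := (hS_mem m' hm'S).2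
      have h1L : (0:ℝ) < 1 - 1/L := by
        rw [sub_pos, div_lt_one hLpos]; exact hL1
      calc (1 - 1/L) * (L ^ (cnt ℓ i) * σ (ℓ+1))
          = (1 - 1/L) * (L * (L ^ (cnt ℓ m') * σ (ℓ+1))) := by rw [hc, pow_succ]; ring
      _ ≤ (1 - 1/L) * (L * σ m') := by
            apply mul_le_mul_of_nonneg_left _ h1L.le
            exact mul_le_mul_of_nonneg_left hIH hLpos.le
      _ ≤ (1 - 1/L) * σ (m'+1) := by
            apply mul_le_mul_of_nonneg_left hjump.le h1L.le
      _ ≤ (q (m'+1) : ℝ) := h2'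
      _ ≤ (q i : ℝ) := hq1'
  -- D function
  set D : ℕ → ℝ := fun ℓ => ∑ i ∈ Finset.Icc (ℓ+1) s, (1/L)^(cnt ℓ i) with hDdef
  clear_value D
  have hD_pos : ∀ ℓ ∈ S, 0 < D ℓ := by
    intro ℓ hℓ
    have hmem := (hS_mem ℓ hℓ).1
    simp only [hDdef]
    apply Finset.sum_pos
    · intros; positivity
    · rw [Finset.nonempty_Icc]; omega
  -- tau bound via D
  have hτD : ∀ ℓ ∈ S, τ ℓ * (σ (ℓ+1) * (1 - 1/L)) ≤ D ℓ := by
    intro ℓ hℓ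
    have hmem := (hS_mem ℓ hℓ).1
    have h1L : (0:ℝ) < 1 - 1/L := by
      rw [sub_pos, div_lt_one hLpos]; exact hL1
    have hσ1pos : 0 < σ (ℓ+1) := hσ_pos _ (by omega)
    simp only [hτdef, tauQ, hDdef]
    rw [Finset.sum_mul]
    apply Finset.sum_le_sum
    intro i hi
    rw [Finset.mem_Icc] at hi
    have hqi : (0:ℝ) < q i := hq_posR i (by omega) hi.2
    have hP := lemP ℓ hℓ i (by omega) hi.2
    have hpow : (0:ℝ) < L ^ (cnt ℓ i) := by positivity
    rw [div_mul_eq_mul_div, one_mul, div_le_iff₀ hqi]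
    calc σ (ℓ+1) * (1 - 1/L) = (1/L)^(cnt ℓ i) * ((1 - 1/L) * (L ^ (cnt ℓ i) * σ (ℓ+1))) := by
          rw [one_div, inv_pow]
          field_simp
    _ ≤ (1/L)^(cnt ℓ i) * q i := by
          apply mul_le_mul_of_nonneg_left hP (by positivity)
    -- cnt is bounded
  have hcnt_le : ∀ ℓ i, cnt ℓ i < s := by
    intro ℓ i
    have h1 : (S.filter (fun m => ℓ < m ∧ m < i)).card ≤ S.card :=
      Finset.card_le_card (Finset.filter_subset _ _)
    have h2 : S.card ≤ (Finset.Icc 1 (s-1)).card := by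
      apply Finset.card_le_card
      rw [hSdef]; exact Finset.filter_subset _ _
    rw [Nat.card_Icc] at h2
    simp only [hcntdef]
    omega
  have hs1R : (1:ℝ) ≤ (s:ℝ) - 1 := by
    have : (2:ℝ) ≤ (s:ℝ) := by exact_mod_cast hs
    linarith
  -- double counting bound on sum of D
  have hDsum : ∑ ℓ ∈ S, D ℓ ≤ ((s:ℝ) - 1) * (L/(L-1)) := by
    have hstep1 : ∀ ℓ ∈ S, D ℓ = ∑ i ∈ Finset.Icc 1 s, (if ℓ + 1 ≤ i then (1/L)^(cnt ℓ i) else 0) := by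
      intro ℓ hℓ
      simp only [hDdef]
      rw [← Finset.sum_filter]
      congr 1
      ext x
      simp only [Finset.mem_filter, Finset.mem_Icc]
      omega
    rw [Finset.sum_congr rfl hstep1, Finset.sum_comm]
    have hinner : ∀ i ∈ Finset.Icc 1 s, (∑ ℓ ∈ S, if ℓ + 1 ≤ i then (1/L)^(cnt ℓ i) else 0)
        ≤ (if 2 ≤ i then L/(L-1) else 0) := by
      intro i hi
      rw [← Finset.sum_filter]
      by_cases h2i : 2 ≤ i
      · simp only [h2i, if_true]
        have hinj : ∀ x ∈ S.filter (fun ℓ => ℓ + 1 ≤ i), ∀ y ∈ S.filter (fun ℓ => ℓ + 1 ≤ i),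
            cnt x i = cnt y i → x = y := by
          have key : ∀ a b, a ∈ S → b ∈ S → a + 1 ≤ i → b + 1 ≤ i → a < b → cnt b i < cnt a i := by
            intro a b haS hbS hai hbi hab
            simp only [hcntdef]
            apply Finset.card_lt_card
            rw [Finset.ssubset_iff_of_subset]
            · refine ⟨b, ?_, ?_⟩
              · rw [Finset.mem_filter]; exact ⟨hbS, hab, by omega⟩
              · rw [Finset.mem_filter]; push_neg; intro _ h; omega
            · intro m hm
              rw [Finset.mem_filter] at hm ⊢
              exact ⟨hm.1, by omega, hm.2.2⟩
          intro x hx y hy hxy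
          rw [Finset.mem_filter] at hx hy
          rcases lt_trichotomy x y with h | h | h
          · have := key x y hx.1 hy.1 hx.2 hy.2 h; omega
          · exact h
          · have := key y x hy.1 hx.1 hy.2 hx.2 h; omega
        have himg : (S.filter (fun ℓ => ℓ + 1 ≤ i)).image (fun ℓ => cnt ℓ i) ⊆ Finset.range s := by
          intro m hm
          rw [Finset.mem_image] at hm
          obtain ⟨ℓ, _, rfl⟩ := hm
          rw [Finset.mem_range]; exact hcnt_le ℓ i
        have hLx0 : (0:ℝ) ≤ 1/L := by positivity
        have hLx1 : (1:ℝ)/L < 1 := by rw [div_lt_one hLpos]; exact hL1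
        calc ∑ ℓ ∈ S.filter (fun ℓ => ℓ + 1 ≤ i), (1/L)^(cnt ℓ i)
            = ∑ m ∈ (S.filter (fun ℓ => ℓ + 1 ≤ i)).image (fun ℓ => cnt ℓ i), (1/L)^m :=
              (Finset.sum_image (fun x hx y hy h => hinj x hx y hy h)).symm
        _ ≤ ∑ m ∈ Finset.range s, (1/L)^m := by
              apply Finset.sum_le_sum_of_subset_of_nonneg himg
              intros; positivity
        _ ≤ (1 - 1/L)⁻¹ := by
              have h := geom_sum_eq (by linarith : (1:ℝ)/L ≠ 1) s
              have e : ((1/L) ^ s - 1)/((1/L) - 1) = (1 - (1/L) ^ s)/(1 - 1/L) := by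
                rw [div_eq_div_iff (by linarith) (by linarith)]; ring
              have hxn : (0:ℝ) ≤ (1/L) ^ s := by positivity
              rw [h, e, ← one_div]
              apply div_le_div₀ (by norm_num) (by linarith) (by linarith) le_rfl
        _ = L/(L-1) := by
              have hq : (1:ℝ) - 1/L = (L-1)/L := by field_simp
              rw [hq, inv_div]
      · simp only [h2i, if_false]
        have hempty : S.filter (fun ℓ => ℓ + 1 ≤ i) = ∅ := by
          apply Finset.filter_false_of_mem
          intro ℓ hℓ
          have := (hS_mem ℓ hℓ).1
          omega
        rw [hempty, Finset.sum_empty]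
    calc ∑ i ∈ Finset.Icc 1 s, (∑ ℓ ∈ S, if ℓ + 1 ≤ i then (1/L)^(cnt ℓ i) else 0)
        ≤ ∑ i ∈ Finset.Icc 1 s, (if 2 ≤ i then L/(L-1) else 0) := Finset.sum_le_sum hinner
    _ = ∑ i ∈ (Finset.Icc 1 s).filter (fun i => 2 ≤ i), (L/(L-1)) := by
        rw [Finset.sum_filter]
    _ = ((s:ℝ) - 1) * (L/(L-1)) := by
        have : (Finset.Icc 1 s).filter (fun i => 2 ≤ i) = Finset.Icc 2 s := by
          ext x
          simp only [Finset.mem_filter, Finset.mem_Icc]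
          omega
        rw [this, Finset.sum_const, Nat.card_Icc, nsmul_eq_mul]
        congr 1
        have : s + 1 - 2 = s - 1 := by omega
        rw [this]
        push_cast [Nat.cast_sub (by omega : 1 ≤ s)]
        ring
  -- trivial lower bound for the whole product
  have hΦ1 : (1:ℝ) ≤ ∏ ℓ ∈ Finset.Icc 1 (s-1), max 1 (1 / (σ ℓ * τ ℓ)) := by
    calc (1:ℝ) = ∏ _ℓ ∈ Finset.Icc 1 (s-1), (1:ℝ) := by rw [Finset.prod_const, one_pow]
    _ ≤ _ := by
      apply Finset.prod_le_prod
      · intros; norm_num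
      · intros; exact le_max_left _ _
  -- telescoping of sigma ratios
  have hratio_pos : ∀ ℓ ∈ Finset.Icc 1 (s-1), 0 < σ (ℓ+1) / σ ℓ := by
    intro ℓ hℓ
    rw [Finset.mem_Icc] at hℓ
    exact div_pos (hσ_pos _ (by omega)) (hσ_pos _ hℓ.1)
  have htel : ∀ m : ℕ, ∏ ℓ ∈ Finset.Icc 1 m, (σ (ℓ+1) / σ ℓ) = σ (m+1) := by
    intro m
    induction m with
    | zero =>
      rw [show Finset.Icc 1 0 = ∅ from Finset.Icc_eq_empty (by omega), Finset.prod_empty, hσ1]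
    | succ m ihm =>
      rw [Finset.prod_Icc_succ_top (by omega : 1 ≤ m+1), ihm]
      have h1 : σ (m+1) ≠ 0 := (hσ_pos _ (by omega)).ne'
      rw [mul_comm, div_mul_cancel₀ _ h1]
  have htels : ∏ ℓ ∈ Finset.Icc 1 (s-1), (σ (ℓ+1) / σ ℓ) = σ s := by
    have h := htel (s-1)
    rw [show s - 1 + 1 = s by omega] at h
    exact h
  rcases S.eq_empty_or_nonempty with hSe | hSne
  · -- no jumps: n is small, trivial
    have hall : ∀ ℓ ∈ Finset.Icc 1 (s-1), σ (ℓ+1)/σ ℓ ≤ L := by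
      intro ℓ hℓ
      rw [Finset.mem_Icc] at hℓ
      have hσp := hσ_pos ℓ (by omega)
      have hnot : ¬ (L * σ ℓ < σ (ℓ+1)) := by
        intro hcon
        have hmem : ℓ ∈ S := by
          rw [hSdef, Finset.mem_filter, Finset.mem_Icc]
          exact ⟨hℓ, hcon⟩
        rw [hSe] at hmem
        exact absurd hmem (Finset.notMem_empty ℓ)
      push_neg at hnot
      rw [div_le_iff₀ hσp]
      linarith
    have hσsle : σ s ≤ L ^ (s-1) := by
      rw [← htels]
      calc ∏ ℓ ∈ Finset.Icc 1 (s-1), (σ (ℓ+1)/σ ℓ) ≤ ∏ _ℓ ∈ Finset.Icc 1 (s-1), L :=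
            Finset.prod_le_prod (fun ℓ hℓ => (hratio_pos ℓ hℓ).le) hall
      _ = L ^ (s-1) := by
            rw [Finset.prod_const, Nat.card_Icc]
            congr 1
    have hL4' : L ^ (s-1) ≤ 4 ^ (s-1) := pow_le_pow_left₀ hLpos.le (by linarith) _
    have h4pos : (0:ℝ) < 4 ^ s := by positivity
    apply lt_of_lt_of_le _ hΦ1
    rw [div_lt_one h4pos]
    have h4s : (4:ℝ)^s = 4 * 4^(s-1) := by
      have hss : s = s - 1 + 1 := by omega
      calc (4:ℝ)^s = 4^(s-1+1) := by rw [← hss]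
      _ = 4^(s-1)*4 := pow_succ _ _
      _ = 4*4^(s-1) := by ring
    have hp1 : (0:ℝ) < 4^(s-1) := by positivity
    calc (n:ℝ) ≤ σ s := hnσ
    _ ≤ 4^(s-1) := le_trans hσsle hL4'
    _ < 4^s := by rw [h4s]; nlinarith
  · -- main case: S nonempty
    set k := S.card with hk
    clear_value k
    have hkpos : 0 < k := by rw [hk]; exact Finset.card_pos.mpr hSne
    have hkRpos : (0:ℝ) < (k:ℝ) := by exact_mod_cast hkpos
    set Sd := ∑ ℓ ∈ S, D ℓ with hSd
    clear_value Sd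
    have hSdpos : 0 < Sd := by rw [hSd]; exact Finset.sum_pos hD_pos hSne
    have hlog_le_div_e : ∀ y : ℝ, 0 < y → Real.log y ≤ y / Real.exp 1 := by
      intro y hy
      have h := Real.log_le_sub_one_of_pos (show 0 < y / Real.exp 1 by positivity)
      rw [Real.log_div hy.ne' (Real.exp_pos 1).ne', Real.log_exp] at h
      linarith
    set A := L / (L-1)^2 with hAdef
    clear_value A
    have hApos : 0 < A := by rw [hAdef]; positivity
    have he9 := Real.exp_one_gt_d9
    have hl29 := Real.log_two_gt_d9
    have hB : (0.942:ℝ) < Real.exp 1 * Real.log 2 / 2 := by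
      have h1 : (2.7182818283:ℝ) ≤ Real.exp 1 := le_of_lt he9
      have h2 : (0.6931471803:ℝ) ≤ Real.log 2 := le_of_lt hl29
      have h3 : (2.7182818283:ℝ) * 0.6931471803 ≤ Real.exp 1 * Real.log 2 :=
        mul_le_mul h1 h2 (by norm_num) (le_trans (by norm_num) h1)
      linarith
    have hAnum : A ≤ Real.exp 1 * Real.log 2 / 2 := by
      rw [hAdef, div_le_iff₀ (by positivity)]
      have h3 : (1.828426:ℝ)^2 ≤ (L-1)^2 :=
        pow_le_pow_left₀ (by norm_num) (by linarith : (1.828426:ℝ) ≤ L - 1) 2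
      have h4 : (0.942:ℝ) * (1.828426:ℝ)^2 ≤ (Real.exp 1 * Real.log 2 / 2) * (L-1)^2 :=
        mul_le_mul hB.le h3 (by positivity) (by linarith)
      nlinarith [h4]
    -- AM-GM via logs
    have hprodD_pos : 0 < ∏ ℓ ∈ S, D ℓ := Finset.prod_pos hD_pos
    have hsum_logD : ∑ ℓ ∈ S, Real.log (D ℓ) ≤ (k:ℝ) * Real.log (Sd / k) := by
      have hper : ∀ ℓ ∈ S, Real.log (D ℓ) ≤ D ℓ * k / Sd - 1 + Real.log (Sd / k) := by
        intro ℓ hℓ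
        have hDp := hD_pos ℓ hℓ
        have h1 : Real.log (D ℓ * k / Sd) ≤ D ℓ * k / Sd - 1 :=
          Real.log_le_sub_one_of_pos (by positivity)
        have h2 : Real.log (D ℓ * k / Sd) = Real.log (D ℓ) - Real.log (Sd / k) := by
          rw [Real.log_div (by positivity) hSdpos.ne', Real.log_mul hDp.ne' hkRpos.ne',
              Real.log_div hSdpos.ne' hkRpos.ne']
          ring
        linarith
      calc ∑ ℓ ∈ S, Real.log (D ℓ) ≤ ∑ ℓ ∈ S, (D ℓ * k / Sd - 1 + Real.log (Sd / k)) :=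
            Finset.sum_le_sum hper
      _ = (∑ ℓ ∈ S, D ℓ * (k:ℝ)) / Sd - k + k * Real.log (Sd / k) := by
            rw [Finset.sum_add_distrib, Finset.sum_sub_distrib, Finset.sum_const, Finset.sum_const]
            simp only [nsmul_eq_mul, ← hk]
            rw [← Finset.sum_div]
            ring
      _ = (k:ℝ) * Real.log (Sd / k) := by
            rw [← Finset.sum_mul, ← hSd]
            field_simp
            ring
    have hSdk_le : Sd / k ≤ (((s:ℝ)-1) * A / k) * (L-1) := by
      have heq : ((s:ℝ)-1) * (L/(L-1)) = ((((s:ℝ)-1) * A) * (L-1)) := by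
        rw [hAdef]
        field_simp
      have h1 : Sd / (k:ℝ) ≤ (((s:ℝ)-1) * (L/(L-1))) / k := by
        gcongr
      calc Sd / (k:ℝ) ≤ (((s:ℝ)-1) * (L/(L-1))) / k := h1
      _ = (((s:ℝ)-1) * A / k) * (L-1) := by rw [heq]; ring
    have hykpos : (0:ℝ) < ((s:ℝ)-1) * A / k := by positivity
    have hlog_key : Real.log (Sd / k) ≤ (((s:ℝ)-1) * A / k) / Real.exp 1 + Real.log (L-1) := by
      calc Real.log (Sd/k) ≤ Real.log ((((s:ℝ)-1) * A / k) * (L-1)) := by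
            apply Real.log_le_log (by positivity) hSdk_le
      _ = Real.log (((s:ℝ)-1) * A / k) + Real.log (L-1) := Real.log_mul hykpos.ne' hLm1.ne'
      _ ≤ (((s:ℝ)-1) * A / k) / Real.exp 1 + Real.log (L-1) := by
            have := hlog_le_div_e _ hykpos
            linarith
    have hlog_prodD : Real.log (∏ ℓ ∈ S, D ℓ) ≤ ((s:ℝ)-1) * (Real.log 2 / 2) + (k:ℝ) * Real.log (L-1) := by
      rw [Real.log_prod (fun ℓ hℓ => (hD_pos ℓ hℓ).ne')]
      have h1 : (k:ℝ) * Real.log (Sd/k) ≤ (k:ℝ) * ((((s:ℝ)-1)*A/k)/Real.exp 1 + Real.log (L-1)) :=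
        mul_le_mul_of_nonneg_left hlog_key hkRpos.le
      have h2 : (k:ℝ) * ((((s:ℝ)-1)*A/k)/Real.exp 1) = ((s:ℝ)-1)*(A/Real.exp 1) := by
        field_simp
      have h3 : A / Real.exp 1 ≤ Real.log 2 / 2 := by
        rw [div_le_iff₀ (Real.exp_pos 1)]
        calc A ≤ Real.exp 1 * Real.log 2 / 2 := hAnum
        _ = Real.log 2 / 2 * Real.exp 1 := by ring
      have h4 : ((s:ℝ)-1) * (A/Real.exp 1) ≤ ((s:ℝ)-1) * (Real.log 2/2) :=
        mul_le_mul_of_nonneg_left h3 (by linarith)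
      calc ∑ ℓ ∈ S, Real.log (D ℓ) ≤ (k:ℝ) * Real.log (Sd/k) := hsum_logD
      _ ≤ (k:ℝ) * ((((s:ℝ)-1)*A/k)/Real.exp 1 + Real.log (L-1)) := h1
      _ = ((s:ℝ)-1)*(A/Real.exp 1) + (k:ℝ) * Real.log (L-1) := by rw [mul_add, h2]
      _ ≤ ((s:ℝ)-1) * (Real.log 2/2) + (k:ℝ) * Real.log (L-1) := by linarith
    have hprodD_le : ∏ ℓ ∈ S, D ℓ ≤ Real.sqrt 2 ^ (s-1) * (L-1)^k := by
      have hs2pos : (0:ℝ) < Real.sqrt 2 := by linarith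
      have hA1 : Real.exp ((k:ℝ) * Real.log (L-1)) = (L-1)^k := by
        rw [Real.exp_nat_mul, Real.exp_log hLm1]
      have hA2 : Real.exp (((s:ℝ)-1) * (Real.log 2/2)) = Real.sqrt 2 ^ (s-1) := by
        rw [show ((s:ℝ)-1) = ((s-1 : ℕ):ℝ) by push_cast [Nat.cast_sub (by omega : 1 ≤ s)]; ring]
        rw [show Real.log 2 / 2 = Real.log (Real.sqrt 2) by rw [Real.log_sqrt (by norm_num)]]
        rw [Real.exp_nat_mul, Real.exp_log hs2pos]
      have hrhs : Real.sqrt 2 ^ (s-1) * (L-1)^k =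
          Real.exp (((s:ℝ)-1) * (Real.log 2/2) + (k:ℝ) * Real.log (L-1)) := by
        rw [Real.exp_add, hA1, hA2]
      rw [hrhs]
      calc ∏ ℓ ∈ S, D ℓ = Real.exp (Real.log (∏ ℓ ∈ S, D ℓ)) := (Real.exp_log hprodD_pos).symm
      _ ≤ _ := Real.exp_le_exp.mpr hlog_prodD
    -- per-element bound over S
    have hg_le : ∀ ℓ ∈ S, σ (ℓ+1)/σ ℓ * ((L-1)/L) / D ℓ ≤ 1 / (σ ℓ * τ ℓ) := by
      intro ℓ hℓ
      have hmem := (hS_mem ℓ hℓ).1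
      have hσℓ : 0 < σ ℓ := hσ_pos _ hmem.1
      have hσℓ1 : 0 < σ (ℓ+1) := hσ_pos _ (by omega)
      have hτℓ : 0 < τ ℓ := hτ_pos ℓ (by omega)
      have hDp := hD_pos ℓ hℓ
      rw [div_le_div_iff₀ hDp (by positivity)]
      have heq : σ (ℓ+1)/σ ℓ * ((L-1)/L) * (σ ℓ * τ ℓ) = τ ℓ * (σ (ℓ+1) * (1 - 1/L)) := by
        field_simp
      rw [heq, one_mul]
      exact hτD ℓ hℓ
    have hg_nonneg : ∀ ℓ ∈ S, 0 ≤ σ (ℓ+1)/σ ℓ * ((L-1)/L) / D ℓ := by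
      intro ℓ hℓ
      have hmem := (hS_mem ℓ hℓ).1
      have hσℓ : 0 < σ ℓ := hσ_pos _ hmem.1
      have hσℓ1 : 0 < σ (ℓ+1) := hσ_pos _ (by omega)
      have hDp := hD_pos ℓ hℓ
      positivity
    have hProdS : ∏ ℓ ∈ S, (σ (ℓ+1)/σ ℓ * ((L-1)/L) / D ℓ) ≤
        ∏ ℓ ∈ Finset.Icc 1 (s-1), max 1 (1/(σ ℓ * τ ℓ)) := by
      calc ∏ ℓ ∈ S, (σ (ℓ+1)/σ ℓ * ((L-1)/L) / D ℓ) ≤ ∏ ℓ ∈ S, max 1 (1/(σ ℓ * τ ℓ)) := by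
            apply Finset.prod_le_prod hg_nonneg
            intro ℓ hℓ
            exact le_trans (hg_le ℓ hℓ) (le_max_right _ _)
      _ ≤ ∏ ℓ ∈ Finset.Icc 1 (s-1), max 1 (1/(σ ℓ * τ ℓ)) := by
            have hsplit := Finset.prod_filter_mul_prod_filter_not (Finset.Icc 1 (s-1))
              (fun ℓ => L * σ ℓ < σ (ℓ+1)) (fun ℓ => max 1 (1/(σ ℓ * τ ℓ)))
            rw [← hSdef] at hsplit
            rw [← hsplit]
            have h1 : (1:ℝ) ≤ ∏ ℓ ∈ Finset.filter (fun ℓ => ¬(L * σ ℓ < σ (ℓ+1))) (Finset.Icc 1 (s-1)), max 1 (1/(σ ℓ * τ ℓ)) := by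
              calc (1:ℝ) = ∏ _ℓ ∈ Finset.filter (fun ℓ => ¬(L * σ ℓ < σ (ℓ+1))) (Finset.Icc 1 (s-1)), (1:ℝ) := by rw [Finset.prod_const, one_pow]
              _ ≤ _ := Finset.prod_le_prod (by intros; norm_num) (by intros; exact le_max_left _ _)
            have h0 : (0:ℝ) ≤ ∏ ℓ ∈ S, max 1 (1/(σ ℓ * τ ℓ)) :=
              Finset.prod_nonneg (fun ℓ _ => le_trans zero_le_one (le_max_left _ _))
            exact le_mul_of_one_le_right h0 h1
    have hProd_eq : ∏ ℓ ∈ S, (σ (ℓ+1)/σ ℓ * ((L-1)/L) / D ℓ) =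
        (∏ ℓ ∈ S, (σ (ℓ+1)/σ ℓ)) * ((L-1)/L)^k / (∏ ℓ ∈ S, D ℓ) := by
      rw [Finset.prod_div_distrib, Finset.prod_mul_distrib, Finset.prod_const, hk]
    -- ratios over complement
    have hfiltercard := Finset.card_filter_add_card_filter_not
      (s := Finset.Icc 1 (s-1)) (p := fun ℓ => L * σ ℓ < σ (ℓ+1))
    rw [← hSdef, Nat.card_Icc] at hfiltercard
    have hnotS_le : ∏ ℓ ∈ (Finset.Icc 1 (s-1)).filter (fun ℓ => ¬ (L*σ ℓ < σ (ℓ+1))),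
        (σ (ℓ+1)/σ ℓ) ≤ L ^ ((s-1) - k) := by
      have hcard : ((Finset.Icc 1 (s-1)).filter (fun ℓ => ¬ (L*σ ℓ < σ (ℓ+1)))).card = (s-1) - k := by
        omega
      calc ∏ ℓ ∈ (Finset.Icc 1 (s-1)).filter (fun ℓ => ¬ (L*σ ℓ < σ (ℓ+1))), (σ (ℓ+1)/σ ℓ)
          ≤ ∏ _ℓ ∈ (Finset.Icc 1 (s-1)).filter (fun ℓ => ¬ (L*σ ℓ < σ (ℓ+1))), L := by
            apply Finset.prod_le_prod
            · intro ℓ hℓ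
              exact (hratio_pos ℓ (Finset.mem_of_mem_filter ℓ hℓ)).le
            · intro ℓ hℓ
              rw [Finset.mem_filter, Finset.mem_Icc] at hℓ
              have hσp := hσ_pos ℓ (by omega)
              have hnot := hℓ.2
              push_neg at hnot
              rw [div_le_iff₀ hσp]
              linarith
      _ = L ^ ((s-1) - k) := by rw [Finset.prod_const, hcard]
    have hsplitP : (∏ ℓ ∈ S, (σ (ℓ+1)/σ ℓ)) *
        (∏ ℓ ∈ (Finset.Icc 1 (s-1)).filter (fun ℓ => ¬ (L*σ ℓ < σ (ℓ+1))), (σ (ℓ+1)/σ ℓ)) = σ s := by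
      rw [hSdef, Finset.prod_filter_mul_prod_filter_not, htels]
    have hSprod_pos : 0 < ∏ ℓ ∈ S, (σ (ℓ+1)/σ ℓ) := by
      apply Finset.prod_pos
      intro ℓ hℓ
      apply hratio_pos
      rw [hSdef] at hℓ
      exact Finset.mem_of_mem_filter ℓ hℓ
    have hSratio_ge : σ s / L ^ ((s-1)-k) ≤ ∏ ℓ ∈ S, (σ (ℓ+1)/σ ℓ) := by
      rw [div_le_iff₀ (by positivity)]
      calc σ s = _ := hsplitP.symm
      _ ≤ (∏ ℓ ∈ S, (σ (ℓ+1)/σ ℓ)) * L ^ ((s-1)-k) :=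
          mul_le_mul_of_nonneg_left hnotS_le hSprod_pos.le
    have hpow_id : L ^ ((s-1)-k) * L^k * Real.sqrt 2 ^ (s-1) = 4^(s-1) := by
      rw [← pow_add, show (s-1)-k + k = s-1 by omega, ← mul_pow, hLsqrt2]
    have hcpos : (0:ℝ) < ((L-1)/L)^k := by positivity
    have hσspos : 0 < σ s := hσ_pos s (by omega)
    have hs2pos : (0:ℝ) < Real.sqrt 2 := by linarith
    have hfinal : σ s / 4^(s-1) ≤ ∏ ℓ ∈ S, (σ (ℓ+1)/σ ℓ * ((L-1)/L) / D ℓ) := by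
      rw [hProd_eq]
      have h1 : (σ s / L^((s-1)-k)) * ((L-1)/L)^k / (Real.sqrt 2 ^ (s-1) * (L-1)^k) ≤
          (∏ ℓ ∈ S, (σ (ℓ+1)/σ ℓ)) * ((L-1)/L)^k / (∏ ℓ ∈ S, D ℓ) := by
        apply div_le_div₀ (by positivity)
          (mul_le_mul_of_nonneg_right hSratio_ge hcpos.le) hprodD_pos hprodD_le
      have hpw1 : (0:ℝ) < L ^ ((s-1)-k) := by positivity
      have hpw3 : (0:ℝ) < Real.sqrt 2 ^ (s-1) := by positivity
      have hpw4 : (0:ℝ) < (L-1) ^ k := by positivity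
      have h2 : σ s / 4^(s-1) =
          (σ s / L^((s-1)-k)) * ((L-1)/L)^k / (Real.sqrt 2 ^ (s-1) * (L-1)^k) := by
        rw [← hpow_id, div_pow]
        have hL0 : L ≠ 0 := hLpos.ne'
        field_simp
      rw [h2]
      exact h1
    have hconc : σ s / 4^(s-1) ≤ ∏ ℓ ∈ Finset.Icc 1 (s-1), max 1 (1/(σ ℓ * τ ℓ)) :=
      le_trans hfinal hProdS
    apply lt_of_lt_of_le _ hconc
    have h4s1 : (0:ℝ) < 4^(s-1) := by positivity
    have h4s : (4:ℝ)^s = 4 * 4^(s-1) := by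
      have hss : s = s - 1 + 1 := by omega
      calc (4:ℝ)^s = 4^(s-1+1) := by rw [← hss]
      _ = 4^(s-1)*4 := pow_succ _ _
      _ = 4*4^(s-1) := by ring
    rw [h4s, div_lt_div_iff₀ (by positivity) h4s1]
    nlinarith
end

section
/- Let $\alpha \ge 2$ be a real number, let $n \ge 2$ be an integer, and let $s \ge 2$ be an integer with $s \le \frac{\log_2 n}{2000 \log_2 \alpha}$. Let $1 = q_1 \le q_2 \le \cdots \le q_s = n$ be integers. Then $\sum_{\ell=1}^{s-1} \left\lfloor \log_2 \max\left(1, \frac{1}{10^4 \alpha^2 \sigma_\ell \tau_\ell}\right) \right\rfloor \ge \frac{99}{100} \log_2 n$. -/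
private lemma max0_add {x y d : ℝ} (hd : 0 ≤ d) (hx : 0 ≤ x + d) (hy : 0 ≤ y + d) :
    max 0 x + max 0 y ≤ max 0 (x + y + d) := by
  rcases le_total x 0 with h1 | h1 <;> rcases le_total y 0 with h2 | h2
  · rw [max_eq_left h1, max_eq_left h2]; simpa using le_max_left 0 (x + y + d)
  · rw [max_eq_left h1, max_eq_right h2]
    refine le_trans ?_ (le_max_right 0 (x + y + d)); linarith
  · rw [max_eq_right h1, max_eq_left h2]
    refine le_trans ?_ (le_max_right 0 (x + y + d)); linarith
  · rw [max_eq_right h1, max_eq_right h2]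
    refine le_trans ?_ (le_max_right 0 (x + y + d)); linarith

private lemma max0_neg (S : ℝ) : max 0 (-S) = max 0 S - S := by
  rcases le_total S 0 with h | h
  · rw [max_eq_right (neg_nonneg.2 h), max_eq_left h]; ring
  · rw [max_eq_left (by linarith : -S ≤ 0), max_eq_right h]; ring

private lemma key_step (B a a' t t' p p' : ℝ) (hB : 1 ≤ B) (hp : 0 < p) (hpp' : p ≤ p')
    (ha : p ≤ a) (ht : 1 / p' ≤ t) (ha' : a' = a + p') (ht' : t' = t + 1 / p) :
    (Real.logb 2 a' - Real.logb 2 a) + (Real.logb 2 t' - Real.logb 2 t)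
      - (Real.logb 2 p' - Real.logb 2 p) - Real.logb 2 B - 3
      ≤ (⌊Real.logb 2 (max 1 (1 / (B * a * t)))⌋ : ℝ) := by
  have h2 : (1 : ℝ) < 2 := one_lt_two
  have hp' : 0 < p' := lt_of_lt_of_le hp hpp'
  have ha0 : 0 < a := lt_of_lt_of_le hp ha
  have ht0 : 0 < t := lt_of_lt_of_le (by positivity) ht
  have hB0 : 0 < B := by linarith
  have ha'0 : 0 < a' := by rw [ha']; positivity
  have ht'0 : 0 < t' := by rw [ht']; positivity
  have hXpos : 0 < 1 / (B * a * t) := by positivity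
  -- floor bound
  have hfloor : Real.logb 2 (max 1 (1 / (B * a * t))) - 1
      ≤ (⌊Real.logb 2 (max 1 (1 / (B * a * t)))⌋ : ℝ) :=
    le_of_lt (Int.sub_one_lt_floor _)
  -- log of max
  have hmaxlog : max 0 (Real.logb 2 (1 / (B * a * t)))
      ≤ Real.logb 2 (max 1 (1 / (B * a * t))) := by
    rcases le_total (1 / (B * a * t)) 1 with h | h
    · rw [max_eq_left h, Real.logb_one]
      exact max_le le_rfl (Real.logb_nonpos h2 hXpos.le h)
    · rw [max_eq_right h, max_eq_right (Real.logb_nonneg h2 h)]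
  have hXval : Real.logb 2 (1 / (B * a * t))
      = -(Real.logb 2 B + Real.logb 2 a + Real.logb 2 t) := by
    rw [one_div, Real.logb_inv, Real.logb_mul (by positivity) (ne_of_gt ht0),
      Real.logb_mul (ne_of_gt hB0) (ne_of_gt ha0)]
  -- M1
  have hM1 : Real.logb 2 a' - Real.logb 2 p' - 1
      ≤ max 0 (Real.logb 2 a - Real.logb 2 p') := by
    rcases le_total a p' with h | h
    · have h1 : a' ≤ 2 * p' := by rw [ha']; linarith
      have h2' : Real.logb 2 a' ≤ Real.logb 2 (2 * p') :=
        Real.logb_le_logb_of_le h2 ha'0 h1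
      rw [Real.logb_mul (by norm_num) (ne_of_gt hp'), Real.logb_self_eq_one h2] at h2'
      refine le_trans ?_ (le_max_left 0 _); linarith
    · have h1 : a' ≤ 2 * a := by rw [ha']; linarith
      have h2' : Real.logb 2 a' ≤ Real.logb 2 (2 * a) :=
        Real.logb_le_logb_of_le h2 ha'0 h1
      rw [Real.logb_mul (by norm_num) (ne_of_gt ha0), Real.logb_self_eq_one h2] at h2'
      refine le_trans ?_ (le_max_right 0 _); linarith
  -- M2
  have hM2 : Real.logb 2 t' + Real.logb 2 p - 1
      ≤ max 0 (Real.logb 2 t + Real.logb 2 p) := by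
    rcases le_total t (1 / p) with h | h
    · have h1 : t' ≤ 2 * (1 / p) := by rw [ht']; linarith
      have h2' : Real.logb 2 t' ≤ Real.logb 2 (2 * (1 / p)) :=
        Real.logb_le_logb_of_le h2 ht'0 h1
      rw [Real.logb_mul (by norm_num) (by positivity), one_div, Real.logb_inv,
        Real.logb_self_eq_one h2] at h2'
      refine le_trans ?_ (le_max_left 0 _); linarith
    · have h1 : t' ≤ 2 * t := by rw [ht']; linarith
      have h2' : Real.logb 2 t' ≤ Real.logb 2 (2 * t) :=
        Real.logb_le_logb_of_le h2 ht'0 h1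
      rw [Real.logb_mul (by norm_num) (ne_of_gt ht0), Real.logb_self_eq_one h2] at h2'
      refine le_trans ?_ (le_max_right 0 _); linarith
  -- combination of positive parts
  have hM : max 0 (Real.logb 2 a - Real.logb 2 p') + max 0 (Real.logb 2 t + Real.logb 2 p)
      ≤ max 0 (Real.logb 2 a + Real.logb 2 t) := by
    have hd : 0 ≤ Real.logb 2 p' - Real.logb 2 p :=
      sub_nonneg.2 (Real.logb_le_logb_of_le h2 hp hpp')
    have hx : 0 ≤ (Real.logb 2 a - Real.logb 2 p') + (Real.logb 2 p' - Real.logb 2 p) := by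
      have := Real.logb_le_logb_of_le h2 hp ha; linarith
    have hy : 0 ≤ (Real.logb 2 t + Real.logb 2 p) + (Real.logb 2 p' - Real.logb 2 p) := by
      have h1 : Real.logb 2 (1 / p') ≤ Real.logb 2 t :=
        Real.logb_le_logb_of_le h2 (by positivity) ht
      rw [one_div, Real.logb_inv] at h1; linarith
    have h3 := max0_add hd hx hy
    have h4 : (Real.logb 2 a - Real.logb 2 p') + (Real.logb 2 t + Real.logb 2 p)
        + (Real.logb 2 p' - Real.logb 2 p) = Real.logb 2 a + Real.logb 2 t := by ring
    rwa [h4] at h3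
  -- monotone shift by logb B ≥ 0
  have hBnn : 0 ≤ Real.logb 2 B := Real.logb_nonneg h2 hB
  have hshift : max 0 (Real.logb 2 a + Real.logb 2 t)
      ≤ max 0 (Real.logb 2 B + Real.logb 2 a + Real.logb 2 t) :=
    max_le_max le_rfl (by linarith)
  have hneg := max0_neg (Real.logb 2 B + Real.logb 2 a + Real.logb 2 t)
  rw [hXval] at hmaxlog
  linarith

theorem stmt_7 (α : ℝ) (hα : 2 ≤ α) (n : ℕ) (hn : 2 ≤ n) (s : ℕ) (hs : 2 ≤ s)
    (hslog : (s : ℝ) ≤ Real.logb 2 n / (2000 * Real.logb 2 α))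
    (q : ℕ → ℕ) (hq1 : q 1 = 1) (hqs : q s = n)
    (hmono : ∀ i j, 1 ≤ i → i ≤ j → j ≤ s → q i ≤ q j) :
    (99 : ℝ) / 100 * Real.logb 2 n ≤
      ((∑ ℓ ∈ Finset.Icc 1 (s - 1),
        ⌊Real.logb 2 (max 1 (1 / (10 ^ 4 * α ^ 2 * sigmaQ q ℓ * tauQ q s ℓ)))⌋ : ℤ) : ℝ) := by
  have h2 : (1 : ℝ) < 2 := one_lt_two
  have hq : ∀ i, 1 ≤ i → i ≤ s → 1 ≤ q i := by
    intro i h1 h2'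
    have := hmono 1 i le_rfl h1 h2'
    omega
  set L := Real.logb 2 (n : ℝ) with hL
  set K := Real.logb 2 (10 ^ 4 * α ^ 2) + 3 with hKdef
  -- the per-term lower bound
  have key_all : ∀ ℓ ∈ Finset.Icc 1 (s - 1),
      (Real.logb 2 (sigmaQ q (ℓ + 1)) - Real.logb 2 (sigmaQ q ℓ))
        + (Real.logb 2 (tauQ q s (ℓ - 1)) - Real.logb 2 (tauQ q s ℓ))
        - (Real.logb 2 (q (ℓ + 1) : ℝ) - Real.logb 2 (q ℓ : ℝ)) - K
      ≤ (⌊Real.logb 2 (max 1 (1 / (10 ^ 4 * α ^ 2 * sigmaQ q ℓ * tauQ q s ℓ)))⌋ : ℝ) := by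
    intro ℓ hℓ
    rw [Finset.mem_Icc] at hℓ
    obtain ⟨h1, hℓ2⟩ := hℓ
    have hls : ℓ + 1 ≤ s := by omega
    have hB : (1 : ℝ) ≤ 10 ^ 4 * α ^ 2 := by nlinarith
    have hp : (0 : ℝ) < (q ℓ : ℝ) := by
      have := hq ℓ h1 (by omega); exact_mod_cast Nat.lt_of_lt_of_le Nat.zero_lt_one this
    have hpp' : (q ℓ : ℝ) ≤ (q (ℓ + 1) : ℝ) := by
      exact_mod_cast hmono ℓ (ℓ + 1) h1 (by omega) hls
    have ha : (q ℓ : ℝ) ≤ sigmaQ q ℓ := by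
      refine Finset.single_le_sum (f := fun i => ((q i : ℕ) : ℝ)) (fun i _ => by positivity)
        (Finset.mem_Icc.mpr ⟨h1, le_rfl⟩)
    have ht : 1 / (q (ℓ + 1) : ℝ) ≤ tauQ q s ℓ := by
      refine Finset.single_le_sum (f := fun i => (1 : ℝ) / (q i : ℝ)) (fun i _ => by positivity)
        (Finset.mem_Icc.mpr ⟨le_rfl, hls⟩)
    have ha' : sigmaQ q (ℓ + 1) = sigmaQ q ℓ + (q (ℓ + 1) : ℝ) := by
      simp only [sigmaQ]
      rw [Finset.sum_Icc_succ_top (by omega : 1 ≤ ℓ + 1)]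
    have ht' : tauQ q s (ℓ - 1) = tauQ q s ℓ + 1 / (q ℓ : ℝ) := by
      simp only [tauQ]
      have hll : ℓ - 1 + 1 = ℓ := by omega
      rw [hll, ← Finset.Ico_add_one_right_eq_Icc, ← Finset.Ico_add_one_right_eq_Icc,
        Finset.sum_eq_sum_Ico_succ_bot (by omega : ℓ < s + 1)]
      ring
    have := key_step (10 ^ 4 * α ^ 2) (sigmaQ q ℓ) (sigmaQ q (ℓ + 1)) (tauQ q s ℓ)
      (tauQ q s (ℓ - 1)) (q ℓ : ℝ) (q (ℓ + 1) : ℝ) hB hp hpp' ha ht ha' ht'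
    rw [hKdef]
    linarith
  -- sum of the lower bounds
  have hsum_le := Finset.sum_le_sum key_all
  -- compute the telescoping sum
  have hset : Finset.Icc 1 (s - 1) = Finset.Ico 1 s := by
    ext x; rw [Finset.mem_Icc, Finset.mem_Ico]; omega
  have e4 : s - 1 + 1 = s := by omega
  have htel : ∑ ℓ ∈ Finset.Icc 1 (s - 1),
      ((Real.logb 2 (sigmaQ q (ℓ + 1)) - Real.logb 2 (sigmaQ q ℓ))
        + (Real.logb 2 (tauQ q s (ℓ - 1)) - Real.logb 2 (tauQ q s ℓ))
        - (Real.logb 2 (q (ℓ + 1) : ℝ) - Real.logb 2 (q ℓ : ℝ)) - K)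
      = (Real.logb 2 (sigmaQ q s) - Real.logb 2 (sigmaQ q 1))
        + (Real.logb 2 (tauQ q s 0) - Real.logb 2 (tauQ q s (s - 1)))
        - (Real.logb 2 (q s : ℝ) - Real.logb 2 (q 1 : ℝ)) - (s - 1 : ℕ) * K := by
    rw [hset, Finset.sum_Ico_eq_sum_range]
    have hcongr : ∀ i ∈ Finset.range (s - 1),
        ((Real.logb 2 (sigmaQ q (1 + i + 1)) - Real.logb 2 (sigmaQ q (1 + i)))
          + (Real.logb 2 (tauQ q s (1 + i - 1)) - Real.logb 2 (tauQ q s (1 + i)))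
          - (Real.logb 2 (q (1 + i + 1) : ℝ) - Real.logb 2 (q (1 + i) : ℝ)) - K)
        = ((Real.logb 2 (sigmaQ q (i + 1 + 1)) - Real.logb 2 (sigmaQ q (i + 1)))
          + (Real.logb 2 (tauQ q s i) - Real.logb 2 (tauQ q s (i + 1)))
          - (Real.logb 2 (q (i + 1 + 1) : ℝ) - Real.logb 2 (q (i + 1) : ℝ)) - K) := by
      intro i _
      have e1 : 1 + i + 1 = i + 1 + 1 := by omega
      have e2 : 1 + i - 1 = i := by omega
      have e3 : 1 + i = i + 1 := by omega
      rw [e1, e2, e3]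
    rw [Finset.sum_congr rfl hcongr]
    have t0 : ∑ i ∈ Finset.range (s - 1),
        ((Real.logb 2 (sigmaQ q (i + 1 + 1)) - Real.logb 2 (sigmaQ q (i + 1)))
          + (Real.logb 2 (tauQ q s i) - Real.logb 2 (tauQ q s (i + 1)))
          - (Real.logb 2 (q (i + 1 + 1) : ℝ) - Real.logb 2 (q (i + 1) : ℝ)) - K)
        = (∑ i ∈ Finset.range (s - 1),
            (Real.logb 2 (sigmaQ q (i + 1 + 1)) - Real.logb 2 (sigmaQ q (i + 1))))
          + (∑ i ∈ Finset.range (s - 1),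
            (Real.logb 2 (tauQ q s i) - Real.logb 2 (tauQ q s (i + 1))))
          - (∑ i ∈ Finset.range (s - 1),
            (Real.logb 2 (q (i + 1 + 1) : ℝ) - Real.logb 2 (q (i + 1) : ℝ)))
          - (s - 1 : ℕ) * K := by
      rw [Finset.sum_sub_distrib, Finset.sum_sub_distrib, Finset.sum_add_distrib,
        Finset.sum_const, Finset.card_range, nsmul_eq_mul]
    rw [t0]
    have t1 : ∑ i ∈ Finset.range (s - 1),
        (Real.logb 2 (sigmaQ q (i + 1 + 1)) - Real.logb 2 (sigmaQ q (i + 1)))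
        = Real.logb 2 (sigmaQ q (s - 1 + 1)) - Real.logb 2 (sigmaQ q (0 + 1)) :=
      Finset.sum_range_sub (fun j => Real.logb 2 (sigmaQ q (j + 1))) (s - 1)
    have t2 : ∑ i ∈ Finset.range (s - 1),
        (Real.logb 2 (tauQ q s i) - Real.logb 2 (tauQ q s (i + 1)))
        = Real.logb 2 (tauQ q s 0) - Real.logb 2 (tauQ q s (s - 1)) :=
      Finset.sum_range_sub' (fun j => Real.logb 2 (tauQ q s j)) (s - 1)
    have t3 : ∑ i ∈ Finset.range (s - 1),
        (Real.logb 2 (q (i + 1 + 1) : ℝ) - Real.logb 2 (q (i + 1) : ℝ))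
        = Real.logb 2 (q (s - 1 + 1) : ℝ) - Real.logb 2 (q (0 + 1) : ℝ) :=
      Finset.sum_range_sub (fun j => Real.logb 2 (q (j + 1) : ℝ)) (s - 1)
    rw [t1, t2, t3, e4]
  -- boundary values
  have hS1 : sigmaQ q 1 = 1 := by simp [sigmaQ, hq1]
  have hSsge : L ≤ Real.logb 2 (sigmaQ q s) := by
    have h1 : ((q s : ℕ) : ℝ) ≤ ∑ i ∈ Finset.Icc 1 s, ((q i : ℕ) : ℝ) :=
      Finset.single_le_sum (f := fun i => ((q i : ℕ) : ℝ))
        (fun (i : ℕ) (_ : i ∈ Finset.Icc 1 s) => by positivity)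
        (Finset.mem_Icc.mpr ⟨(by omega : 1 ≤ s), le_rfl⟩)
    rw [hqs] at h1
    have h0 : (n : ℝ) ≤ sigmaQ q s := h1
    exact Real.logb_le_logb_of_le h2 (by exact_mod_cast (by omega : 0 < n)) h0
  have hT0ge : 0 ≤ Real.logb 2 (tauQ q s 0) := by
    refine Real.logb_nonneg h2 ?_
    have h1 : (1 : ℝ) / ((q 1 : ℕ) : ℝ) ≤ ∑ i ∈ Finset.Icc (0 + 1) s, (1 : ℝ) / ((q i : ℕ) : ℝ) :=
      Finset.single_le_sum (f := fun i => (1 : ℝ) / ((q i : ℕ) : ℝ))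
        (fun (i : ℕ) (_ : i ∈ Finset.Icc (0 + 1) s) => by positivity)
        (Finset.mem_Icc.mpr ⟨le_rfl, (by omega : 0 + 1 ≤ s)⟩)
    rw [hq1] at h1
    have h0 : (1 : ℝ) ≤ tauQ q s 0 := by
      simp only [tauQ]
      simpa using h1
    exact h0
  have hTs : Real.logb 2 (tauQ q s (s - 1)) = -L := by
    have e4 : s - 1 + 1 = s := by omega
    have h0 : tauQ q s (s - 1) = 1 / (n : ℝ) := by
      simp only [tauQ]
      rw [e4, Finset.Icc_self, Finset.sum_singleton, hqs]
    rw [h0, one_div, Real.logb_inv]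
  -- bound on K
  have hnpos : (0 : ℝ) < (n : ℝ) := by exact_mod_cast (by omega : 0 < n)
  have hLnn : 0 ≤ L := Real.logb_nonneg h2 (by exact_mod_cast hn.trans' (by norm_num))
  have hαlog : (1 : ℝ) ≤ Real.logb 2 α := by
    have := Real.logb_le_logb_of_le h2 (by norm_num : (0 : ℝ) < 2) hα
    rwa [Real.logb_self_eq_one h2] at this
  have hKval : K ≤ 19 * Real.logb 2 α := by
    have hsplit : Real.logb 2 (10 ^ 4 * α ^ 2)
        = 4 * Real.logb 2 (10 : ℝ) + 2 * Real.logb 2 α := by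
      rw [Real.logb_mul (by norm_num) (by positivity), Real.logb_pow, Real.logb_pow]
      push_cast
      ring
    have h14 : 4 * Real.logb 2 (10 : ℝ) ≤ 14 := by
      have hle : Real.logb 2 ((10 : ℝ) ^ (4 : ℕ)) ≤ Real.logb 2 ((2 : ℝ) ^ (14 : ℕ)) :=
        Real.logb_le_logb_of_le h2 (by norm_num) (by norm_num)
      rw [Real.logb_pow, Real.logb_pow, Real.logb_self_eq_one h2] at hle
      push_cast at hle
      linarith
    rw [hKdef, hsplit]
    linarith
  have hKnn : 0 ≤ K := by
    rw [hKdef]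
    have : 0 ≤ Real.logb 2 (10 ^ 4 * α ^ 2) := Real.logb_nonneg h2 (by nlinarith)
    linarith
  -- bound (s-1) * K ≤ L / 100
  have hαpos : 0 < 2000 * Real.logb 2 α := by linarith
  have hslog' : (s : ℝ) * (2000 * Real.logb 2 α) ≤ L := by
    rw [hL]
    exact (le_div_iff₀ hαpos).mp hslog
  have hcast : ((s - 1 : ℕ) : ℝ) = (s : ℝ) - 1 := by
    have h1 : (1 : ℕ) ≤ s := by omega
    rw [Nat.cast_sub h1, Nat.cast_one]
  have hsK : ((s - 1 : ℕ) : ℝ) * K ≤ L / 100 := by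
    rw [hcast]
    have hs1 : (1 : ℝ) ≤ (s : ℝ) := by exact_mod_cast Nat.one_le_of_lt hs
    have h3 : ((s : ℝ) - 1) * K ≤ (s : ℝ) * (19 * Real.logb 2 α) := by
      have := mul_le_mul (by linarith : (s : ℝ) - 1 ≤ (s : ℝ)) hKval hKnn (by linarith)
      linarith
    nlinarith [hslog']
  -- put everything together
  have hcastsum : ((∑ ℓ ∈ Finset.Icc 1 (s - 1),
      ⌊Real.logb 2 (max 1 (1 / (10 ^ 4 * α ^ 2 * sigmaQ q ℓ * tauQ q s ℓ)))⌋ : ℤ) : ℝ)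
      = ∑ ℓ ∈ Finset.Icc 1 (s - 1),
        (⌊Real.logb 2 (max 1 (1 / (10 ^ 4 * α ^ 2 * sigmaQ q ℓ * tauQ q s ℓ)))⌋ : ℝ) :=
    Int.cast_sum _ _
  rw [hcastsum]
  rw [htel] at hsum_le
  have hz1 : Real.logb 2 (sigmaQ q 1) = 0 := by rw [hS1, Real.logb_one]
  have hz2 : Real.logb 2 ((q 1 : ℕ) : ℝ) = 0 := by rw [hq1]; norm_num
  have hz3 : Real.logb 2 ((q s : ℕ) : ℝ) = L := by rw [hqs]
  linarith [hsum_le, hz1, hz2, hz3, hSsge, hT0ge, hTs, hsK, hLnn]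
end

section
/- Let $n, d$ be positive integers with $d \le n$, let $\alpha \ge 1$ be a real number, and set $z = n/d$ (a rational number). Let $Q_1, \ldots, Q_s \subseteq [n]$ be nonempty sets with $q_i := |Q_i|$, and suppose $\sum_{i : q_i \ge z} \frac{1}{q_i} \le \frac{1}{100\alpha z}$. If $I$ is drawn uniformly at random from the $d$-element subsets of $[n]$, then $\Pr\left[\exists\, i \in \{1,\ldots,s\} \text{ with } q_i \ge z \text{ and } I \cap Q_i = \emptyset\right] \le \frac{1}{100}$. -/
lemma aux_choose (n d : ℕ) (q : ℕ) (hdn : d ≤ n) :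
    (n - q).choose d * n ^ q ≤ n.choose d * (n - d) ^ q := by
  rcases Nat.eq_zero_or_pos d with hd0 | hd1
  · subst hd0; simp
  induction q with
  | zero => simp
  | succ q ih =>
    by_cases h : d ≤ n - (q + 1)
    · have hdq : d + (q + 1) ≤ n := by omega
      have hnq : 0 < n - q := by omega
      have hid : (n - q) * ((n - (q + 1)).choose d) = (n - q).choose d * ((n - q) - d) := by
        have h1 : n - (q + 1) + 1 = n - q := by omega
        calc (n - q) * ((n - (q + 1)).choose d)
            = Nat.succ (n - (q + 1)) * ((n - (q + 1)).choose d) := by rw [Nat.succ_eq_add_one, h1]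
          _ = (n - (q + 1) + 1).choose (d + 1) * (d + 1) := Nat.add_one_mul_choose_eq _ _
          _ = (n - q).choose (d + 1) * (d + 1) := by rw [h1]
          _ = (n - q).choose d * ((n - q) - d) := Nat.choose_succ_right_eq _ _
      have hprod : ((n - q) - d) * n ≤ (n - d) * (n - q) := by
        zify [show d ≤ n - q by omega, show q ≤ n by omega, show d ≤ n by omega]
        nlinarith [Int.natCast_nonneg d, Int.natCast_nonneg q]
      have key : (n - (q + 1)).choose d * n ^ (q + 1) * (n - q) ≤
          n.choose d * (n - d) ^ (q + 1) * (n - q) := by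
        calc (n - (q + 1)).choose d * n ^ (q + 1) * (n - q)
            = ((n - q) * ((n - (q + 1)).choose d)) * (n ^ q * n) := by ring
          _ = ((n - q).choose d * ((n - q) - d)) * (n ^ q * n) := by rw [hid]
          _ = ((n - q).choose d * n ^ q) * (((n - q) - d) * n) := by ring
          _ ≤ (n.choose d * (n - d) ^ q) * ((n - d) * (n - q)) :=
              Nat.mul_le_mul ih hprod
          _ = n.choose d * (n - d) ^ (q + 1) * (n - q) := by ring
      exact Nat.le_of_mul_le_mul_right key hnq
    · have : n - (q + 1) < d := by omega
      rw [Nat.choose_eq_zero_of_lt this]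
      simp

lemma aux_bern (x : ℝ) (hx0 : 0 ≤ x) (hx1 : x ≤ 1) (q : ℕ) :
    (1 - x) ^ q * (1 + q * x) ≤ 1 := by
  have h1 : 1 + (q : ℝ) * x ≤ (1 + x) ^ q := one_add_mul_le_pow (by linarith) q
  have h2 : (1 - x) ^ q * (1 + x) ^ q = (1 - x ^ 2) ^ q := by
    rw [← mul_pow]; ring_nf
  calc (1 - x) ^ q * (1 + q * x)
      ≤ (1 - x) ^ q * (1 + x) ^ q :=
        mul_le_mul_of_nonneg_left h1 (pow_nonneg (by linarith) q)
    _ = (1 - x ^ 2) ^ q := h2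
    _ ≤ 1 := pow_le_one₀ (by nlinarith) (by nlinarith)

open scoped Classical in
theorem stmt_14 (n d : ℕ) (hn : 0 < n) (hd : 0 < d) (hdn : d ≤ n)
    (α : ℝ) (hα : 1 ≤ α) (s : ℕ) (Q : ℕ → Finset (Fin n))
    (hQ : ∀ i ∈ Finset.Icc 1 s, (Q i).Nonempty)
    (hsum : ∑ i ∈ (Finset.Icc 1 s).filter
        (fun i => (n : ℝ) / d ≤ ((Q i).card : ℝ)), (1 : ℝ) / (Q i).card
      ≤ 1 / (100 * α * ((n : ℝ) / d))) :
    ((((Finset.univ : Finset (Fin n)).powersetCard d).filter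
        (fun I => ∃ i ∈ Finset.Icc 1 s,
          (n : ℝ) / d ≤ ((Q i).card : ℝ) ∧ I ∩ Q i = ∅)).card : ℝ)
      / (((Finset.univ : Finset (Fin n)).powersetCard d).card : ℝ)
      ≤ 1 / 100 := by

  have hnR : (0 : ℝ) < n := by exact_mod_cast hn
  have hdR : (0 : ℝ) < d := by exact_mod_cast hd
  have hz0 : (0 : ℝ) < (n : ℝ) / d := div_pos hnR hdR
  set z : ℝ := (n : ℝ) / d with hz
  set T := (Finset.Icc 1 s).filter (fun i => z ≤ ((Q i).card : ℝ)) with hT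
  have hNn : ((Finset.univ : Finset (Fin n)).powersetCard d).card = n.choose d := by
    simp [Finset.card_powersetCard]
  have hNpos : (0 : ℝ) < (n.choose d : ℝ) := by exact_mod_cast Nat.choose_pos hdn
  -- count of d-subsets disjoint from Q i
  have hcount : ∀ i, (((Finset.univ : Finset (Fin n)).powersetCard d).filter
      (fun I => I ∩ Q i = ∅)).card = (n - (Q i).card).choose d := by
    intro i
    have : ((Finset.univ : Finset (Fin n)).powersetCard d).filter
        (fun I => I ∩ Q i = ∅) = ((Q i)ᶜ).powersetCard d := by
      ext I
      simp only [Finset.mem_filter, Finset.mem_powersetCard, Finset.subset_univ, true_and,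
        ← Finset.disjoint_iff_inter_eq_empty, le_compl_iff_disjoint_right.symm,
        Finset.le_iff_subset]
      tauto
    rw [this, Finset.card_powersetCard, Finset.card_compl, Fintype.card_fin]
  -- union bound
  have hsub : ((Finset.univ : Finset (Fin n)).powersetCard d).filter
        (fun I => ∃ i ∈ Finset.Icc 1 s,
          z ≤ ((Q i).card : ℝ) ∧ I ∩ Q i = ∅)
      ⊆ T.biUnion (fun i => ((Finset.univ : Finset (Fin n)).powersetCard d).filter
          (fun I => I ∩ Q i = ∅)) := by
    intro I hI
    simp only [Finset.mem_filter] at hI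
    obtain ⟨hIm, i, hi, hzi, hint⟩ := hI
    simp only [Finset.mem_biUnion, Finset.mem_filter, hT]
    exact ⟨i, ⟨hi, hzi⟩, hIm, hint⟩
  have hcard : (((Finset.univ : Finset (Fin n)).powersetCard d).filter
        (fun I => ∃ i ∈ Finset.Icc 1 s,
          z ≤ ((Q i).card : ℝ) ∧ I ∩ Q i = ∅)).card
      ≤ ∑ i ∈ T, (n - (Q i).card).choose d := by
    refine (Finset.card_le_card hsub).trans ?_
    refine Finset.card_biUnion_le.trans ?_
    exact Finset.sum_le_sum (fun i _ => le_of_eq (hcount i))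
  -- key per-index bound
  have key : ∀ i ∈ T, ((n - (Q i).card).choose d : ℝ)
      ≤ (n.choose d : ℝ) * (z / ((Q i).card : ℝ)) := by
    intro i hi
    rw [hT, Finset.mem_filter] at hi
    have hq1 : 0 < (Q i).card := Finset.card_pos.mpr (hQ i hi.1)
    set q := (Q i).card with hq
    have hqR : (0 : ℝ) < (q : ℝ) := by exact_mod_cast hq1
    have h1 : ((n - q).choose d : ℝ) * (n : ℝ) ^ q
        ≤ (n.choose d : ℝ) * ((n : ℝ) - d) ^ q := by
      have := aux_choose n d q hdn
      have hcast : (((n - d : ℕ)) : ℝ) = (n : ℝ) - d := Nat.cast_sub hdn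
      calc ((n - q).choose d : ℝ) * (n : ℝ) ^ q
          = (((n - q).choose d * n ^ q : ℕ) : ℝ) := by push_cast; ring
        _ ≤ ((n.choose d * (n - d) ^ q : ℕ) : ℝ) := by exact_mod_cast this
        _ = (n.choose d : ℝ) * ((n : ℝ) - d) ^ q := by push_cast [hcast]; ring
    set x : ℝ := (d : ℝ) / n with hx
    have hx0 : 0 < x := div_pos hdR hnR
    have hx1 : x ≤ 1 := by rw [hx, div_le_one hnR]; exact_mod_cast hdn
    have h2 : ((n - q).choose d : ℝ) ≤ (n.choose d : ℝ) * (1 - x) ^ q := by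
      have hfx : ((n : ℝ) - d) ^ q = (1 - x) ^ q * (n : ℝ) ^ q := by
        rw [← mul_pow]; congr 1; rw [hx]; field_simp
      rw [hfx, show (n.choose d : ℝ) * ((1 - x) ^ q * (n : ℝ) ^ q)
        = (n.choose d : ℝ) * (1 - x) ^ q * (n : ℝ) ^ q by ring] at h1
      exact le_of_mul_le_mul_right h1 (pow_pos hnR q)
    have h3 : (1 - x) ^ q ≤ z / q := by
      have hb := aux_bern x hx0.le hx1 q
      have hqx : (0 : ℝ) < (q : ℝ) * x := by positivity
      have hA : (1 - x) ^ q ≤ 1 / (1 + q * x) := by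
        rw [le_div_iff₀ (by linarith)]; exact hb
      have hB : 1 / (1 + (q : ℝ) * x) ≤ 1 / ((q : ℝ) * x) :=
        one_div_le_one_div_of_le hqx (by linarith)
      have hxz : x = 1 / z := by rw [hx, hz, one_div_div]
      have hC : 1 / ((q : ℝ) * x) = z / q := by
        rw [hxz, mul_one_div, one_div_div]
      linarith
    calc ((n - q).choose d : ℝ) ≤ (n.choose d : ℝ) * (1 - x) ^ q := h2
      _ ≤ (n.choose d : ℝ) * (z / q) := mul_le_mul_of_nonneg_left h3 hNpos.le
  -- put everything together
  rw [hNn, div_le_iff₀ hNpos]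
  have hR1 : (((Finset.univ : Finset (Fin n)).powersetCard d).filter
        (fun I => ∃ i ∈ Finset.Icc 1 s,
          z ≤ ((Q i).card : ℝ) ∧ I ∩ Q i = ∅)).card
      ≤ (∑ i ∈ T, ((n - (Q i).card).choose d : ℝ)) := by
    calc ((((Finset.univ : Finset (Fin n)).powersetCard d).filter
        (fun I => ∃ i ∈ Finset.Icc 1 s,
          z ≤ ((Q i).card : ℝ) ∧ I ∩ Q i = ∅)).card : ℝ)
        ≤ ((∑ i ∈ T, (n - (Q i).card).choose d : ℕ) : ℝ) := by exact_mod_cast hcard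
      _ = ∑ i ∈ T, ((n - (Q i).card).choose d : ℝ) := by push_cast; ring
  calc (((((Finset.univ : Finset (Fin n)).powersetCard d).filter
        (fun I => ∃ i ∈ Finset.Icc 1 s,
          z ≤ ((Q i).card : ℝ) ∧ I ∩ Q i = ∅)).card : ℝ))
      ≤ ∑ i ∈ T, ((n - (Q i).card).choose d : ℝ) := hR1
    _ ≤ ∑ i ∈ T, (n.choose d : ℝ) * (z / ((Q i).card : ℝ)) := Finset.sum_le_sum key
    _ = (n.choose d : ℝ) * z * ∑ i ∈ T, (1 : ℝ) / ((Q i).card : ℝ) := by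
        rw [Finset.mul_sum]; exact Finset.sum_congr rfl (fun i _ => by ring)
    _ ≤ (n.choose d : ℝ) * z * (1 / (100 * α * z)) := by
        exact mul_le_mul_of_nonneg_left hsum (by positivity)
    _ = (n.choose d : ℝ) / (100 * α) := by
        rw [mul_one_div, show (n.choose d : ℝ) * z = z * (n.choose d : ℝ) from mul_comm _ _,
          show (100 * α * z : ℝ) = z * (100 * α) from by ring,
          mul_div_mul_left _ _ hz0.ne']
    _ ≤ 1 / 100 * (n.choose d : ℝ) := by
        have h := div_le_div_of_nonneg_left hNpos.le (by norm_num : (0:ℝ) < 100)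
          (by linarith : (100:ℝ) ≤ 100 * α)
        linarith
end

section
/- Let $n, d, \alpha$ be positive integers with $\alpha \ge 2$ and $\alpha d \le n/2$, and set $z = n/d$. Let $Q_1, \ldots, Q_s \subseteq [n]$ be nonempty sets with $q_i := |Q_i|$, and suppose both $\sum_{i : q_i \le z} q_i \le \frac{z}{100\alpha}$ and $\sum_{i : q_i \ge z} \frac{1}{q_i} \le \frac{1}{100\alpha z}$. Draw a random nested pair $(I_0, I_1)$ as follows: $I_0$ is uniform over the $d$-element subsets of $[n]$, and given $I_0$, the set $I_1$ is uniform over the $\alpha d$-element subsets of $[n]$ containing $I_0$. Then $\Pr\left[\exists\, i \in \{1,\ldots,s\} : \mathbb{1}[I_0 \cap Q_i \ne \emptyset] \ne \mathbb{1}[I_1 \cap Q_i \ne \emptyset]\right] \le \frac{3}{100}$; that is, with probability at least $97/100$ the test-outcome vectors $(\mathbb{1}[I_0 \cap Q_i \ne \emptyset])_{i=1}^s$ and $(\mathbb{1}[I_1 \cap Q_i \ne \emptyset])_{i=1}^s$ coincide. -/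
/-- The family of nested pairs `(I₀, I₁)` with `I₀ ⊆ I₁`, `|I₀| = d` and `|I₁| = D`,
over the ground set `Fin n`. -/
def nestedPairs (n d D : ℕ) : Finset (Finset (Fin n) × Finset (Fin n)) :=
  (((Finset.univ : Finset (Fin n)).powersetCard d) ×ˢ
    ((Finset.univ : Finset (Fin n)).powersetCard D)).filter (fun p => p.1 ⊆ p.2)


open Finset

lemma card_supersets {n k D : ℕ} (A : Finset (Fin n)) (hA : A.card = k) (hk : k ≤ D) :
    (((Finset.univ : Finset (Fin n)).powersetCard D).filter (fun B => A ⊆ B)).card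
      = (n - k).choose (D - k) := by
  classical
  have hAc : (Aᶜ : Finset (Fin n)).card = n - k := by
    rw [Finset.card_compl, hA, Fintype.card_fin]
  rw [← hAc, ← Finset.card_powersetCard]
  exact Finset.card_bij' (fun B _ => B \ A) (fun C _ => C ∪ A)
      (by
        intro B hB
        simp only [Finset.mem_filter, Finset.mem_powersetCard] at hB ⊢
        obtain ⟨⟨_, hBc⟩, hAB⟩ := hB
        constructor
        · intro x hx; simp only [Finset.mem_sdiff] at hx
          simp [Finset.mem_compl, hx.2]
        · rw [Finset.card_sdiff_of_subset hAB, hBc, hA])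
      (by
        intro C hC
        simp only [Finset.mem_powersetCard] at hC
        obtain ⟨hCc, hCcard⟩ := hC
        have hdisj : Disjoint C A := by
          intro x hx1 hx2
          intro y hy
          have := hCc (hx1 hy)
          simp only [Finset.mem_compl] at this
          exact absurd (hx2 hy) this
        simp only [Finset.mem_filter, Finset.mem_powersetCard]
        refine ⟨⟨Finset.subset_univ _, ?_⟩, Finset.subset_union_right⟩
        rw [Finset.card_union_of_disjoint hdisj, hCcard, hA]
        omega)
      (by
        intro B hB
        simp only [Finset.mem_filter, Finset.mem_powersetCard] at hB
        exact Finset.sdiff_union_of_subset hB.2)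
      (by
        intro C hC
        simp only [Finset.mem_powersetCard] at hC
        apply Finset.union_sdiff_cancel_right
        intro x hx1 hx2
        intro y hy
        have := hC.1 (hx1 hy)
        simp only [Finset.mem_compl] at this
        exact absurd (hx2 hy) this)


lemma mem_nestedPairs {n d D : ℕ} {p : Finset (Fin n) × Finset (Fin n)} :
    p ∈ nestedPairs n d D ↔ p.1.card = d ∧ p.2.card = D ∧ p.1 ⊆ p.2 := by
  simp [nestedPairs, Finset.mem_filter, Finset.mem_powersetCard, and_assoc]

lemma card_filter_fst {n d D : ℕ} (hdD : d ≤ D) (P : Finset (Fin n) → Prop) [DecidablePred P] :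
    ((nestedPairs n d D).filter (fun p => P p.1)).card
      = (((Finset.univ : Finset (Fin n)).powersetCard d).filter P).card
        * (n - d).choose (D - d) := by
  classical
  have key : ((nestedPairs n d D).filter (fun p => P p.1))
      = (((Finset.univ : Finset (Fin n)).powersetCard d).filter P).biUnion
        (fun A => (((Finset.univ : Finset (Fin n)).powersetCard D).filter
            (fun B => A ⊆ B)).map
          ⟨fun B => (A, B), fun a b h => by simpa using congrArg Prod.snd h⟩) := by
    ext p
    simp only [Finset.mem_filter, mem_nestedPairs, Finset.mem_biUnion, Finset.mem_map,
      Function.Embedding.coeFn_mk, Finset.mem_powersetCard]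
    constructor
    · rintro ⟨⟨h1, h2, h3⟩, hP⟩
      exact ⟨p.1, ⟨⟨Finset.subset_univ _, h1⟩, hP⟩, p.2, ⟨⟨Finset.subset_univ _, h2⟩, h3⟩, rfl⟩
    · rintro ⟨A, ⟨⟨-, hA⟩, hP⟩, B, ⟨⟨-, hB⟩, hAB⟩, rfl⟩
      exact ⟨⟨hA, hB, hAB⟩, hP⟩
  rw [key, Finset.card_biUnion]
  · rw [Finset.sum_congr rfl (fun A hA => ?_), Finset.sum_const, smul_eq_mul]
    simp only [Finset.mem_filter, Finset.mem_powersetCard] at hA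
    rw [Finset.card_map]
    exact card_supersets A hA.1.2 hdD
  · intro a ha b hb hab
    simp only [Finset.disjoint_left, Finset.mem_map, Function.Embedding.coeFn_mk]
    rintro p ⟨B, -, rfl⟩ ⟨B', -, h⟩
    exact hab (show a = b from (congrArg Prod.fst h).symm)

lemma card_filter_snd {n d D : ℕ} (P : Finset (Fin n) → Prop) [DecidablePred P] :
    ((nestedPairs n d D).filter (fun p => P p.2)).card
      = (((Finset.univ : Finset (Fin n)).powersetCard D).filter P).card * D.choose d := by
  classical
  have key : ((nestedPairs n d D).filter (fun p => P p.2))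
      = (((Finset.univ : Finset (Fin n)).powersetCard D).filter P).biUnion
        (fun B => (B.powersetCard d).map
          ⟨fun A => (A, B), fun a b h => by simpa using congrArg Prod.fst h⟩) := by
    ext p
    simp only [Finset.mem_filter, mem_nestedPairs, Finset.mem_biUnion, Finset.mem_map,
      Function.Embedding.coeFn_mk, Finset.mem_powersetCard]
    constructor
    · rintro ⟨⟨h1, h2, h3⟩, hP⟩
      exact ⟨p.2, ⟨⟨Finset.subset_univ _, h2⟩, hP⟩, p.1, ⟨h3, h1⟩, rfl⟩
    · rintro ⟨B, ⟨⟨-, hB⟩, hP⟩, A, ⟨hAB, hA⟩, rfl⟩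
      exact ⟨⟨hA, hB, hAB⟩, hP⟩
  rw [key, Finset.card_biUnion]
  · rw [Finset.sum_congr rfl (fun B hB => ?_), Finset.sum_const, smul_eq_mul]
    simp only [Finset.mem_filter, Finset.mem_powersetCard] at hB
    rw [Finset.card_map, Finset.card_powersetCard, hB.1.2]
  · intro a ha b hb hab
    simp only [Finset.disjoint_left, Finset.mem_map, Function.Embedding.coeFn_mk]
    rintro p ⟨A, -, rfl⟩ ⟨A', -, h⟩
    exact hab (show a = b from (congrArg Prod.snd h).symm)


-- per-factor nat inequality
lemma factor_ineq (n q i : ℕ) : (n - q - i) * n ≤ (n - i) * (n - q) := by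
  rcases Nat.le_total n (q + i) with h | h
  · have : n - q - i = 0 := by omega
    simp [this]
  · have h1 : q ≤ n := by omega
    have h2 : i ≤ n := by omega
    zify [h1, h2, show q + i ≤ n from h, show i ≤ n - q by omega]
    nlinarith [Nat.cast_nonneg (α := ℤ) q, Nat.cast_nonneg (α := ℤ) i]

lemma descfac_ratio (n q d : ℕ) :
    (n - q).descFactorial d * n ^ d ≤ n.descFactorial d * (n - q) ^ d := by
  rw [Nat.descFactorial_eq_prod_range, Nat.descFactorial_eq_prod_range]
  calc (∏ i ∈ Finset.range d, (n - q - i)) * n ^ d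
      = ∏ i ∈ Finset.range d, ((n - q - i) * n) := by
        rw [Finset.prod_mul_distrib, Finset.prod_const, Finset.card_range]
    _ ≤ ∏ i ∈ Finset.range d, ((n - i) * (n - q)) :=
        Finset.prod_le_prod' fun i _ => factor_ineq n q i
    _ = (∏ i ∈ Finset.range d, (n - i)) * (n - q) ^ d := by
        rw [Finset.prod_mul_distrib, Finset.prod_const, Finset.card_range]

lemma choose_ratio (n q d : ℕ) :
    (n - q).choose d * n ^ d ≤ n.choose d * (n - q) ^ d := by
  have h := descfac_ratio n q d
  rw [Nat.descFactorial_eq_factorial_mul_choose, Nat.descFactorial_eq_factorial_mul_choose] at h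
  rw [mul_assoc, mul_assoc] at h
  exact Nat.le_of_mul_le_mul_left h (Nat.factorial_pos d)

lemma key_large (n q d : ℕ) (hn : 0 < n) (hd : 0 < d) (hq : 0 < q) (hqn : q ≤ n) :
    ((n - q).choose d : ℝ) ≤ (n : ℝ) / (d * q) * (n.choose d : ℝ) := by
  have hn' : (0 : ℝ) < n := by exact_mod_cast hn
  have hq' : (0 : ℝ) < q := by exact_mod_cast hq
  have hd' : (0 : ℝ) < d := by exact_mod_cast hd
  set t : ℝ := (q : ℝ) / n with ht
  have ht0 : 0 < t := div_pos hq' hn'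
  have ht1 : t ≤ 1 := by
    rw [div_le_one hn']; exact_mod_cast hqn
  -- step 1: choose ratio in ℝ
  have hcast : ((n - q : ℕ) : ℝ) = (n : ℝ) - q := by
    push_cast [hqn]; ring
  have h1 : ((n - q).choose d : ℝ) ≤ (n.choose d : ℝ) * (1 - t) ^ d := by
    have h := choose_ratio n q d
    have h' : ((n - q).choose d : ℝ) * (n : ℝ) ^ d ≤ (n.choose d : ℝ) * ((n : ℝ) - q) ^ d := by
      rw [← hcast]; exact_mod_cast h
    have hnd : (0 : ℝ) < (n : ℝ) ^ d := pow_pos hn' d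
    rw [← le_div_iff₀ hnd] at h'
    calc ((n - q).choose d : ℝ) ≤ (n.choose d : ℝ) * ((n : ℝ) - q) ^ d / (n : ℝ) ^ d := h'
      _ = (n.choose d : ℝ) * (1 - t) ^ d := by
          rw [mul_div_assoc, ← div_pow]
          congr 2
          rw [ht]; field_simp
  -- step 2: Bernoulli
  have h2 : (1 - t) ^ d ≤ 1 / ((d : ℝ) * t) := by
    have hb : (d : ℝ) * t ≤ (1 + t) ^ d := by
      calc (d : ℝ) * t ≤ 1 + d * t := by linarith
        _ ≤ (1 + t) ^ d := one_add_mul_le_pow (by linarith) d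
    have h1t : (0 : ℝ) ≤ (1 - t) ^ d := pow_nonneg (by linarith) d
    have hmul : (1 - t) ^ d * ((d : ℝ) * t) ≤ 1 := by
      calc (1 - t) ^ d * ((d : ℝ) * t) ≤ (1 - t) ^ d * (1 + t) ^ d :=
            mul_le_mul_of_nonneg_left hb h1t
        _ = ((1 - t) * (1 + t)) ^ d := (mul_pow _ _ _).symm
        _ = (1 - t ^ 2) ^ d := by ring_nf
        _ ≤ 1 := pow_le_one₀ (by nlinarith) (by nlinarith)
    rw [le_div_iff₀ (by positivity)]
    exact hmul
  have hdt : 1 / ((d : ℝ) * t) = (n : ℝ) / (d * q) := by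
    rw [ht]; field_simp
  calc ((n - q).choose d : ℝ) ≤ (n.choose d : ℝ) * (1 - t) ^ d := h1
    _ ≤ (n.choose d : ℝ) * (1 / ((d : ℝ) * t)) :=
        mul_le_mul_of_nonneg_left h2 (Nat.cast_nonneg _)
    _ = (n : ℝ) / (d * q) * (n.choose d : ℝ) := by rw [hdt]; ring

lemma mismatch_struct {n d D : ℕ} {Q : Finset (Fin n)} {p : Finset (Fin n) × Finset (Fin n)}
    (hp : p ∈ nestedPairs n d D)
    (hm : ¬((p.1 ∩ Q).Nonempty ↔ (p.2 ∩ Q).Nonempty)) :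
    p.1 ∩ Q = ∅ ∧ (p.2 ∩ Q).Nonempty := by
  have hsub := (mem_nestedPairs.1 hp).2.2
  have himp : (p.1 ∩ Q).Nonempty → (p.2 ∩ Q).Nonempty := by
    rintro ⟨x, hx⟩
    rw [Finset.mem_inter] at hx
    exact ⟨x, Finset.mem_inter.2 ⟨hsub hx.1, hx.2⟩⟩
  constructor
  · rw [← Finset.not_nonempty_iff_eq_empty]
    intro h
    exact hm ⟨fun _ => himp h, fun _ => h⟩
  · by_contra h
    exact hm ⟨himp, fun h2 => absurd h2 h⟩

lemma small_count {n d D : ℕ} (hD1 : 1 ≤ D) (Q : Finset (Fin n)) :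
    ((nestedPairs n d D).filter
        (fun p => ¬((p.1 ∩ Q).Nonempty ↔ (p.2 ∩ Q).Nonempty))).card
      ≤ Q.card * ((n - 1).choose (D - 1) * D.choose d) := by
  classical
  have hsub : (nestedPairs n d D).filter
        (fun p => ¬((p.1 ∩ Q).Nonempty ↔ (p.2 ∩ Q).Nonempty))
      ⊆ Q.biUnion (fun x => (nestedPairs n d D).filter (fun p => x ∈ p.2)) := by
    intro p hp
    rw [Finset.mem_filter] at hp
    obtain ⟨-, x, hx⟩ := mismatch_struct hp.1 hp.2
    rw [Finset.mem_inter] at hx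
    exact Finset.mem_biUnion.2 ⟨x, hx.2, Finset.mem_filter.2 ⟨hp.1, hx.1⟩⟩
  calc ((nestedPairs n d D).filter
        (fun p => ¬((p.1 ∩ Q).Nonempty ↔ (p.2 ∩ Q).Nonempty))).card
      ≤ (Q.biUnion (fun x => (nestedPairs n d D).filter (fun p => x ∈ p.2))).card :=
        Finset.card_le_card hsub
    _ ≤ ∑ x ∈ Q, ((nestedPairs n d D).filter (fun p => x ∈ p.2)).card :=
        Finset.card_biUnion_le
    _ = ∑ _x ∈ Q, ((n - 1).choose (D - 1) * D.choose d) := by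
        refine Finset.sum_congr rfl fun x _ => ?_
        rw [card_filter_snd (fun B => x ∈ B)]
        congr 1
        have he : ((Finset.univ : Finset (Fin n)).powersetCard D).filter (fun B => x ∈ B)
            = ((Finset.univ : Finset (Fin n)).powersetCard D).filter (fun B => {x} ⊆ B) :=
          Finset.filter_congr fun B _ => by simp [Finset.singleton_subset_iff]
        rw [he, card_supersets {x} (Finset.card_singleton x) hD1]
    _ = Q.card * ((n - 1).choose (D - 1) * D.choose d) := by
        rw [Finset.sum_const, smul_eq_mul]

lemma large_count {n d D : ℕ} (hdD : d ≤ D) (Q : Finset (Fin n)) :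
    ((nestedPairs n d D).filter
        (fun p => ¬((p.1 ∩ Q).Nonempty ↔ (p.2 ∩ Q).Nonempty))).card
      ≤ (n - Q.card).choose d * (n - d).choose (D - d) := by
  classical
  have hsub : (nestedPairs n d D).filter
        (fun p => ¬((p.1 ∩ Q).Nonempty ↔ (p.2 ∩ Q).Nonempty))
      ⊆ (nestedPairs n d D).filter (fun p => p.1 ∩ Q = ∅) := by
    intro p hp
    rw [Finset.mem_filter] at hp ⊢
    exact ⟨hp.1, (mismatch_struct hp.1 hp.2).1⟩
  refine le_trans (Finset.card_le_card hsub) ?_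
  rw [card_filter_fst hdD (fun A => A ∩ Q = ∅)]
  apply Nat.mul_le_mul_right
  have he : ((Finset.univ : Finset (Fin n)).powersetCard d).filter (fun A => A ∩ Q = ∅)
      = Qᶜ.powersetCard d := by
    ext A
    simp only [Finset.mem_filter, Finset.mem_powersetCard, Finset.subset_univ, true_and]
    constructor
    · rintro ⟨hAd, hAQ⟩
      refine ⟨fun x hx => Finset.mem_compl.2 fun hxQ => ?_, hAd⟩
      exact (Finset.eq_empty_iff_forall_notMem.1 hAQ x) (Finset.mem_inter.2 ⟨hx, hxQ⟩)
    · rintro ⟨hAc, hAd⟩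
      refine ⟨hAd, Finset.eq_empty_iff_forall_notMem.2 fun x hx => ?_⟩
      rw [Finset.mem_inter] at hx
      exact (Finset.mem_compl.1 (hAc hx.1)) hx.2
  rw [he, Finset.card_powersetCard, Finset.card_compl, Fintype.card_fin]

lemma nestedPairs_card_snd (n d D : ℕ) :
    (nestedPairs n d D).card = n.choose D * D.choose d := by
  classical
  have h := card_filter_snd (n := n) (d := d) (D := D) (fun _ => True)
  simpa [Finset.filter_true, Finset.card_powersetCard, Fintype.card_fin] using h

lemma nestedPairs_card_fst (n d D : ℕ) (hdD : d ≤ D) :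
    (nestedPairs n d D).card = n.choose d * (n - d).choose (D - d) := by
  classical
  have h := card_filter_fst (n := n) hdD (fun _ => True)
  simpa [Finset.filter_true, Finset.card_powersetCard, Fintype.card_fin] using h

set_option maxHeartbeats 1000000 in
open scoped Classical in
theorem stmt_15 (n d α : ℕ) (hn : 0 < n) (hd : 0 < d) (hα : 2 ≤ α)
    (hαd : 2 * (α * d) ≤ n) (s : ℕ) (Q : ℕ → Finset (Fin n))
    (hQ : ∀ i ∈ Finset.Icc 1 s, (Q i).Nonempty)
    (hsum1 : ∑ i ∈ (Finset.Icc 1 s).filter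
        (fun i => ((Q i).card : ℝ) ≤ (n : ℝ) / d), ((Q i).card : ℝ)
      ≤ ((n : ℝ) / d) / (100 * α))
    (hsum2 : ∑ i ∈ (Finset.Icc 1 s).filter
        (fun i => (n : ℝ) / d ≤ ((Q i).card : ℝ)), (1 : ℝ) / (Q i).card
      ≤ 1 / (100 * α * ((n : ℝ) / d))) :
    (((nestedPairs n d (α * d)).filter (fun p => ∃ i ∈ Finset.Icc 1 s,
        ¬((p.1 ∩ Q i).Nonempty ↔ (p.2 ∩ Q i).Nonempty))).card : ℝ)
      / ((nestedPairs n d (α * d)).card : ℝ)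
      ≤ 3 / 100 := by
  set D := α * d with hD
  have hdD : d ≤ D := Nat.le_mul_of_pos_left d (by omega)
  have hD1 : 1 ≤ D := le_trans hd hdD
  have hDn : D ≤ n := by omega
  have hdn : d ≤ n := le_trans hdD hDn
  have hn' : (0 : ℝ) < n := by exact_mod_cast hn
  have hd' : (0 : ℝ) < d := by exact_mod_cast hd
  have hα' : (2 : ℝ) ≤ α := by exact_mod_cast hα
  have hα0 : (0 : ℝ) < α := by linarith
  set N : ℝ := ((nestedPairs n d D).card : ℝ) with hN
  have hNpos : 0 < N := by
    rw [hN]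
    have := nestedPairs_card_fst n d D hdD
    rw [this]
    push_cast
    have h1 : 0 < n.choose d := Nat.choose_pos hdn
    have h2 : 0 < (n - d).choose (D - d) := Nat.choose_pos (by omega)
    positivity
  -- union bound
  set Bad := @Finset.filter _ (fun p => ∃ i ∈ Finset.Icc 1 s,
      ¬((p.1 ∩ Q i).Nonempty ↔ (p.2 ∩ Q i).Nonempty))
      (fun p => Classical.propDecidable _) (nestedPairs n d D) with hBad
  set M : ℕ → ℕ := fun i => ((nestedPairs n d D).filter
      (fun p => ¬((p.1 ∩ Q i).Nonempty ↔ (p.2 ∩ Q i).Nonempty))).card with hM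
  have hunion : (Bad.card : ℝ) ≤ ∑ i ∈ Finset.Icc 1 s, (M i : ℝ) := by
    have hsub : Bad ⊆ (Finset.Icc 1 s).biUnion (fun i => (nestedPairs n d D).filter
        (fun p => ¬((p.1 ∩ Q i).Nonempty ↔ (p.2 ∩ Q i).Nonempty))) := by
      intro p hp
      rw [hBad] at hp
      simp only [Finset.mem_filter] at hp
      obtain ⟨hp1, i, hi, hmi⟩ := hp
      exact Finset.mem_biUnion.2 ⟨i, hi, Finset.mem_filter.2 ⟨hp1, hmi⟩⟩
    calc (Bad.card : ℝ) ≤ (((Finset.Icc 1 s).biUnion (fun i => (nestedPairs n d D).filter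
          (fun p => ¬((p.1 ∩ Q i).Nonempty ↔ (p.2 ∩ Q i).Nonempty)))).card : ℝ) := by
          exact_mod_cast Finset.card_le_card hsub
      _ ≤ ∑ i ∈ Finset.Icc 1 s, (M i : ℝ) := by
          exact_mod_cast Finset.card_biUnion_le
  -- per-i bounds
  have hsmall : ∀ i, (M i : ℝ) ≤ ((Q i).card : ℝ) * ((D : ℝ) / n * N) := by
    intro i
    have h1 : (M i : ℝ) ≤ ((Q i).card : ℝ) * (((n - 1).choose (D - 1) : ℝ) * (D.choose d : ℝ)) := by
      have := small_count (d := d) hD1 (Q i)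
      simp only [hM]
      exact_mod_cast this
    refine le_trans h1 (le_of_eq ?_)
    congr 1
    -- (n-1).choose (D-1) * D.choose d = D/n * N
    have hid : n * (n - 1).choose (D - 1) = n.choose D * D := by
      obtain ⟨m, rfl⟩ : ∃ m, n = m + 1 := ⟨n - 1, by omega⟩
      obtain ⟨k, hk⟩ : ∃ k, D = k + 1 := ⟨D - 1, by omega⟩
      rw [hk]
      simpa using Nat.add_one_mul_choose_eq m k
    have hNv : N = (n.choose D : ℝ) * (D.choose d : ℝ) := by
      rw [hN, nestedPairs_card_snd]; push_cast; ring
    rw [hNv]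
    have hid' : (n : ℝ) * ((n - 1).choose (D - 1) : ℝ) = (n.choose D : ℝ) * D := by
      exact_mod_cast hid
    field_simp
    nlinarith [hid']
  have hlarge : ∀ i ∈ Finset.Icc 1 s, (M i : ℝ) ≤ 1 / ((Q i).card : ℝ) * (((n : ℝ) / d) * N) := by
    intro i hi
    have hq1 : 0 < (Q i).card := Finset.card_pos.2 (hQ i hi)
    have hqn : (Q i).card ≤ n := by
      have := Finset.card_le_univ (Q i)
      simpa [Fintype.card_fin] using this
    have h1 : (M i : ℝ) ≤ ((n - (Q i).card).choose d : ℝ) * (((n - d).choose (D - d)) : ℝ) := by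
      have := large_count hdD (Q i)
      simp only [hM]
      exact_mod_cast this
    have h2 : ((n - (Q i).card).choose d : ℝ) ≤ (n : ℝ) / (d * (Q i).card) * (n.choose d : ℝ) :=
      key_large n (Q i).card d hn hd hq1 hqn
    have hNv : N = (n.choose d : ℝ) * (((n - d).choose (D - d)) : ℝ) := by
      rw [hN, nestedPairs_card_fst n d D hdD]; push_cast; ring
    have hq' : (0 : ℝ) < (Q i).card := by exact_mod_cast hq1
    calc (M i : ℝ) ≤ ((n - (Q i).card).choose d : ℝ) * (((n - d).choose (D - d)) : ℝ) := h1
      _ ≤ ((n : ℝ) / (d * (Q i).card) * (n.choose d : ℝ)) * (((n - d).choose (D - d)) : ℝ) := by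
          apply mul_le_mul_of_nonneg_right h2 (Nat.cast_nonneg _)
      _ = 1 / ((Q i).card : ℝ) * (((n : ℝ) / d) * N) := by
          rw [hNv]; field_simp
  -- split the sum
  set z : ℝ := (n : ℝ) / d with hz
  have hz0 : 0 < z := div_pos hn' hd'
  have hsplit : ∑ i ∈ Finset.Icc 1 s, (M i : ℝ)
      = ∑ i ∈ (Finset.Icc 1 s).filter (fun i => ((Q i).card : ℝ) ≤ z), (M i : ℝ)
      + ∑ i ∈ (Finset.Icc 1 s).filter (fun i => ¬((Q i).card : ℝ) ≤ z), (M i : ℝ) :=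
    (Finset.sum_filter_add_sum_filter_not _ _ _).symm
  have hb1 : ∑ i ∈ (Finset.Icc 1 s).filter (fun i => ((Q i).card : ℝ) ≤ z), (M i : ℝ)
      ≤ N / 100 := by
    calc ∑ i ∈ (Finset.Icc 1 s).filter (fun i => ((Q i).card : ℝ) ≤ z), (M i : ℝ)
        ≤ ∑ i ∈ (Finset.Icc 1 s).filter (fun i => ((Q i).card : ℝ) ≤ z),
            ((Q i).card : ℝ) * ((D : ℝ) / n * N) := Finset.sum_le_sum fun i _ => hsmall i
      _ = (∑ i ∈ (Finset.Icc 1 s).filter (fun i => ((Q i).card : ℝ) ≤ z),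
            ((Q i).card : ℝ)) * ((D : ℝ) / n * N) := by rw [Finset.sum_mul]
      _ ≤ (z / (100 * α)) * ((D : ℝ) / n * N) := by
          apply mul_le_mul_of_nonneg_right hsum1
          have : (0:ℝ) ≤ (D:ℝ) := Nat.cast_nonneg _
          positivity
      _ = N / 100 := by
          rw [hz, hD]
          push_cast
          field_simp
  have hb2 : ∑ i ∈ (Finset.Icc 1 s).filter (fun i => ¬((Q i).card : ℝ) ≤ z), (M i : ℝ)
      ≤ N / 200 := by
    have step1 : ∑ i ∈ (Finset.Icc 1 s).filter (fun i => ¬((Q i).card : ℝ) ≤ z), (M i : ℝ)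
        ≤ ∑ i ∈ (Finset.Icc 1 s).filter (fun i => z ≤ ((Q i).card : ℝ)),
            1 / ((Q i).card : ℝ) * (z * N) := by
      refine le_trans (Finset.sum_le_sum (fun i hi => ?_))
        (Finset.sum_le_sum_of_subset_of_nonneg (Finset.monotone_filter_right _
          (fun i _ (hi : ¬((Q i).card : ℝ) ≤ z) => le_of_lt (not_le.1 hi))) ?_)
      · rw [Finset.mem_filter] at hi
        exact hlarge i hi.1
      · intro i hi _
        rw [Finset.mem_filter] at hi
        have hq1 : 0 < (Q i).card := Finset.card_pos.2 (hQ i hi.1)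
        have hq' : (0 : ℝ) < (Q i).card := by exact_mod_cast hq1
        positivity
    refine le_trans step1 ?_
    have : ∑ i ∈ (Finset.Icc 1 s).filter (fun i => z ≤ ((Q i).card : ℝ)),
        1 / ((Q i).card : ℝ) * (z * N)
        = (∑ i ∈ (Finset.Icc 1 s).filter (fun i => z ≤ ((Q i).card : ℝ)),
            1 / ((Q i).card : ℝ)) * (z * N) := by rw [Finset.sum_mul]
    rw [this]
    calc (∑ i ∈ (Finset.Icc 1 s).filter (fun i => z ≤ ((Q i).card : ℝ)),
          1 / ((Q i).card : ℝ)) * (z * N)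
        ≤ (1 / (100 * α * z)) * (z * N) := by
          apply mul_le_mul_of_nonneg_right hsum2 (by positivity)
      _ = N / (100 * α) := by field_simp
      _ ≤ N / 200 := by
          rw [div_le_div_iff₀ (by positivity) (by norm_num)]
          nlinarith
  -- conclude
  rw [div_le_iff₀ hNpos]
  calc (Bad.card : ℝ) ≤ ∑ i ∈ Finset.Icc 1 s, (M i : ℝ) := hunion
    _ ≤ N / 100 + N / 200 := by rw [hsplit]; exact add_le_add hb1 hb2
    _ ≤ 3 / 100 * N := by linarith
end

section
/- Let $n = 2^N$ and $\alpha = 2^a$ with integers $a \ge 1$ and $N \ge 1$, and let $s$ be a positive integer with $s + 2 \le \frac{\log_2 n}{2000 \log_2 \alpha}$. Let $Q_1, \ldots, Q_s \subseteq [n]$ be arbitrary fixed tests, and let $g : \{0,1\}^s \times \{0,1\}^s \to \{0,1\}$ be an arbitrary function. Draw $(\xi, I_0, I_1)$ as follows: $d = 2^{\boldsymbol{k}}$ where $\boldsymbol{k}$ is uniform over $\{a, a+1, \ldots, N - a - 1\}$; $\xi$ is uniform over $\{0,1\}$; $I_{1-\xi}$ is uniform over the $d$-element subsets of $[n]$;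 and given $I_{1-\xi}$, the set $I_\xi$ is uniform over the $\alpha d$-element subsets of $[n]$ containing $I_{1-\xi}$ (so $I_\xi \supset I_{1-\xi}$ and $|I_\xi| = \alpha|I_{1-\xi}|$). Then $\Pr\left[g\big(o(I_0), o(I_1)\big) = \xi\right] \le \frac{103}{200}$, where $o(I) := \big(\mathbb{1}[I \cap Q_1 \ne \emptyset], \ldots, \mathbb{1}[I \cap Q_s \ne \emptyset]\big) \in \{0,1\}^s$ is the vector of test outcomes on defective set $I$. In particular, no deterministic non-adaptive algorithm making $s$ tests can identify the larger of the two defective sets with success probability at least $3/4$ under this input distribution. -/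
/-- The vector of test outcomes `o(I) = (𝟙[I ∩ Q₁ ≠ ∅], …, 𝟙[I ∩ Q_s ≠ ∅])`
for the defective set `I`. -/
def outcomes {n s : ℕ} (Q : Fin s → Finset (Fin n)) (I : Finset (Fin n)) : Fin s → Bool :=
  fun i => decide (I ∩ Q i).Nonempty


open Finset

lemma card_superset_filter {n : ℕ} (J : Finset (Fin n)) (D : ℕ) (hJ : J.card ≤ D) :
    (((Finset.univ : Finset (Fin n)).powersetCard D).filter (fun K => J ⊆ K)).card
      = (n - J.card).choose (D - J.card) := by
  have : (((Finset.univ : Finset (Fin n)).powersetCard D).filter (fun K => J ⊆ K)).card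
      = ((Finset.univ \ J).powersetCard (D - J.card)).card := by
    apply Finset.card_bij' (fun K _ => K \ J) (fun K' _ => K' ∪ J)
    · intro K hK
      simp only [mem_filter, Finset.mem_powersetCard_univ] at hK
      simp only [Finset.mem_powersetCard]
      exact ⟨Finset.sdiff_subset_sdiff (Finset.subset_univ _) le_rfl,
        by rw [Finset.card_sdiff_of_subset hK.2, hK.1]⟩
    · intro K' hK'
      simp only [Finset.mem_powersetCard] at hK'
      have hdisj : Disjoint K' J := by
        intro x hx hxJ
        exact fun y hy => by
          have := hK'.1 (hx hy)
          simp [Finset.mem_sdiff] at this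
          exact absurd (hxJ hy) this.elim
      simp only [mem_filter, Finset.mem_powersetCard_univ]
      constructor
      · rw [Finset.card_union_of_disjoint hdisj, hK'.2]
        omega
      · exact Finset.subset_union_right
    · intro K hK
      simp only [mem_filter, Finset.mem_powersetCard_univ] at hK
      exact Finset.sdiff_union_of_subset hK.2
    · intro K' hK'
      simp only [Finset.mem_powersetCard] at hK'
      have hdisj : Disjoint K' J := by
        rw [Finset.disjoint_left]
        intro x hx hxJ
        have := hK'.1 hx
        simp [Finset.mem_sdiff] at this
        exact this hxJ
      exact Finset.union_sdiff_cancel_right hdisj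
  rw [this, Finset.card_powersetCard]
  congr 1
  rw [Finset.card_sdiff_of_subset (Finset.subset_univ _), Finset.card_univ, Fintype.card_fin]

lemma count_fst {n d D : ℕ} (hdD : d ≤ D) (S : Finset (Fin n)) :
    ((nestedPairs n d D).filter (fun p => p.1 ⊆ S)).card
      = S.card.choose d * (n - d).choose (D - d) := by
  rw [Finset.card_eq_sum_card_fiberwise
    (f := fun p => p.1) (t := S.powersetCard d)
    (fun p hp => by
      simp only [Finset.mem_coe, mem_filter] at hp
      rw [Finset.mem_coe, Finset.mem_powersetCard]
      exact ⟨hp.2, (mem_nestedPairs.1 hp.1).1⟩)]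
  have hfib : ∀ J ∈ S.powersetCard d,
      (((nestedPairs n d D).filter (fun p => p.1 ⊆ S)).filter (fun p => p.1 = J)).card
        = (n - d).choose (D - d) := by
    intro J hJ
    rw [Finset.mem_powersetCard] at hJ
    have key : (((nestedPairs n d D).filter (fun p => p.1 ⊆ S)).filter (fun p => p.1 = J)).card
        = (((Finset.univ : Finset (Fin n)).powersetCard D).filter (fun K => J ⊆ K)).card := by
      refine Finset.card_bij' (fun p _ => p.2) (fun K _ => (J, K)) ?hi ?hj ?li ?ri
      case hi =>
        intro p hp
        simp only [mem_filter] at hp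
        rcases hp with ⟨⟨hp1, _⟩, hp2⟩
        rw [mem_nestedPairs] at hp1
        simp only [mem_filter, Finset.mem_powersetCard_univ]
        exact ⟨hp1.2.1, hp2 ▸ hp1.2.2⟩
      case hj =>
        intro K hK
        simp only [mem_filter, Finset.mem_powersetCard_univ] at hK
        simp only [mem_filter, mem_nestedPairs]
        exact ⟨⟨⟨hJ.2, hK.1, hK.2⟩, hJ.1⟩, trivial⟩
      case li =>
        intro p hp
        simp only [mem_filter] at hp
        exact Prod.ext hp.2.symm rfl
      case ri =>
        intro K hK
        rfl
    rw [key, card_superset_filter J D (by rw [hJ.2]; exact hdD), hJ.2]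
  rw [Finset.sum_congr rfl hfib, Finset.sum_const, Finset.card_powersetCard, smul_eq_mul]

lemma count_snd {n d D : ℕ} (S : Finset (Fin n)) :
    ((nestedPairs n d D).filter (fun p => p.2 ⊆ S)).card
      = S.card.choose D * D.choose d := by
  rw [Finset.card_eq_sum_card_fiberwise
    (f := fun p => p.2) (t := S.powersetCard D)
    (fun p hp => by
      simp only [Finset.mem_coe, mem_filter] at hp
      rw [Finset.mem_coe, Finset.mem_powersetCard]
      exact ⟨hp.2, (mem_nestedPairs.1 hp.1).2.1⟩)]
  have hfib : ∀ K ∈ S.powersetCard D,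
      (((nestedPairs n d D).filter (fun p => p.2 ⊆ S)).filter (fun p => p.2 = K)).card
        = D.choose d := by
    intro K hK
    rw [Finset.mem_powersetCard] at hK
    have key : (((nestedPairs n d D).filter (fun p => p.2 ⊆ S)).filter (fun p => p.2 = K)).card
        = (K.powersetCard d).card := by
      refine Finset.card_bij' (fun p _ => p.1) (fun J _ => (J, K)) ?hi ?hj ?li ?ri
      case hi =>
        intro p hp
        simp only [mem_filter] at hp
        rcases hp with ⟨⟨hp1, _⟩, hp2⟩
        rw [mem_nestedPairs] at hp1
        rw [Finset.mem_powersetCard]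
        exact ⟨hp2 ▸ hp1.2.2, hp1.1⟩
      case hj =>
        intro J hJ
        rw [Finset.mem_powersetCard] at hJ
        simp only [mem_filter, mem_nestedPairs]
        exact ⟨⟨⟨hJ.2, hK.2, hJ.1⟩, hK.1⟩, trivial⟩
      case li =>
        intro p hp
        simp only [mem_filter] at hp
        exact Prod.ext rfl hp.2.symm
      case ri =>
        intro J hJ
        rfl
    rw [key, Finset.card_powersetCard, hK.2]
  rw [Finset.sum_congr rfl hfib, Finset.sum_const, Finset.card_powersetCard, smul_eq_mul]

lemma card_nestedPairs_fst {n d D : ℕ} (hdD : d ≤ D) :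
    (nestedPairs n d D).card = n.choose d * (n - d).choose (D - d) := by
  have h := count_fst (n := n) hdD Finset.univ
  rw [Finset.filter_true_of_mem (fun p _ => Finset.subset_univ _), Finset.card_univ,
    Fintype.card_fin] at h
  exact h

lemma card_nestedPairs_snd {n d D : ℕ} :
    (nestedPairs n d D).card = n.choose D * D.choose d := by
  have h := count_snd (n := n) (d := d) (D := D) Finset.univ
  rw [Finset.filter_true_of_mem (fun p _ => Finset.subset_univ _), Finset.card_univ,
    Fintype.card_fin] at h
  exact h

lemma miss_iff {n : ℕ} (J Qi : Finset (Fin n)) : ¬(J ∩ Qi).Nonempty ↔ J ⊆ Qiᶜ := by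
  rw [Finset.not_nonempty_iff_eq_empty, ← Finset.disjoint_iff_inter_eq_empty,
    ← le_compl_iff_disjoint_right]

lemma miss_fst_card {n d D : ℕ} (hdD : d ≤ D) (Qi : Finset (Fin n)) :
    ((nestedPairs n d D).filter (fun p => ¬(p.1 ∩ Qi).Nonempty)).card
      = (n - Qi.card).choose d * (n - d).choose (D - d) := by
  rw [Finset.filter_congr (fun p _ => by rw [miss_iff p.1 Qi]), count_fst hdD,
    Finset.card_compl, Fintype.card_fin]

lemma miss_snd_card {n d D : ℕ} (Qi : Finset (Fin n)) :
    ((nestedPairs n d D).filter (fun p => ¬(p.2 ∩ Qi).Nonempty)).card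
      = (n - Qi.card).choose D * D.choose d := by
  rw [Finset.filter_congr (fun p _ => by rw [miss_iff p.2 Qi]), count_snd,
    Finset.card_compl, Fintype.card_fin]

lemma ratio_fst {n d D : ℕ} (hdD : d ≤ D) (hDn : D ≤ n) (Qi : Finset (Fin n)) :
    (((nestedPairs n d D).filter (fun p => ¬(p.1 ∩ Qi).Nonempty)).card : ℝ)
      / ((nestedPairs n d D).card : ℝ)
      = ((n - Qi.card).choose d : ℝ) / (n.choose d : ℝ) := by
  rw [miss_fst_card hdD, card_nestedPairs_fst hdD]
  push_cast
  rw [mul_div_mul_right]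
  exact_mod_cast Nat.choose_pos (by omega : D - d ≤ n - d) |>.ne'

lemma ratio_snd {n d D : ℕ} (hdD : d ≤ D) (hDn : D ≤ n) (Qi : Finset (Fin n)) :
    (((nestedPairs n d D).filter (fun p => ¬(p.2 ∩ Qi).Nonempty)).card : ℝ)
      / ((nestedPairs n d D).card : ℝ)
      = ((n - Qi.card).choose D : ℝ) / (n.choose D : ℝ) := by
  rw [miss_snd_card, card_nestedPairs_snd]
  push_cast
  rw [mul_div_mul_right]
  exact_mod_cast (Nat.choose_pos hdD).ne'

lemma per_k {n s : ℕ} {d D : ℕ} (hdD : d ≤ D) (hDn : D ≤ n)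
    (Q : Fin s → Finset (Fin n)) (g : (Fin s → Bool) → (Fin s → Bool) → Bool) :
    (1 / 2 : ℝ) * ∑ ξ : Bool,
        (((nestedPairs n d D).filter (fun p =>
            g (outcomes Q (cond ξ p.1 p.2)) (outcomes Q (cond ξ p.2 p.1)) = ξ)).card : ℝ)
          / ((nestedPairs n d D).card : ℝ)
      ≤ 1 / 2 + (1 / 2) * ∑ i : Fin s,
          (((n - (Q i).card).choose d : ℝ) / (n.choose d : ℝ)
            - ((n - (Q i).card).choose D : ℝ) / (n.choose D : ℝ)) := by
  classical
  set P := nestedPairs n d D with hP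
  have hPc : 0 < (P.card : ℝ) := by
    rw [hP, card_nestedPairs_snd]
    exact_mod_cast Nat.mul_pos (Nat.choose_pos hDn) (Nat.choose_pos hdD)
  set ft := P.filter (fun p => g (outcomes Q p.1) (outcomes Q p.2) = true) with hft
  set ff := P.filter (fun p => g (outcomes Q p.2) (outcomes Q p.1) = false) with hff
  set Ebar := P.filter (fun p => outcomes Q p.1 ≠ outcomes Q p.2) with hEbar
  set bad := fun i : Fin s =>
    P.filter (fun p => ¬(p.1 ∩ Q i).Nonempty ∧ (p.2 ∩ Q i).Nonempty) with hbad
  set A := fun i : Fin s => P.filter (fun p => ¬(p.1 ∩ Q i).Nonempty) with hA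
  set C := fun i : Fin s => P.filter (fun p => ¬(p.2 ∩ Q i).Nonempty) with hC
  -- step 1
  have h1 : ft.card + ff.card ≤ P.card + Ebar.card := by
    rw [← Finset.card_union_add_card_inter]
    have hu : (ft ∪ ff).card ≤ P.card :=
      Finset.card_le_card (Finset.union_subset (filter_subset _ _) (filter_subset _ _))
    have hi : (ft ∩ ff).card ≤ Ebar.card := by
      apply Finset.card_le_card
      intro p hp
      simp only [hft, hff, Finset.mem_inter, Finset.mem_filter] at hp
      simp only [hEbar, Finset.mem_filter]
      refine ⟨hp.1.1, fun he => ?_⟩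
      have h2 := hp.2.2
      rw [← he] at h2
      rw [he] at h2
      have h3 := hp.1.2
      rw [he] at h3
      rw [h3] at h2
      simp at h2
    omega
  -- step 2
  have h2 : Ebar.card ≤ ∑ i : Fin s, (bad i).card := by
    have hsub : Ebar ⊆ Finset.univ.biUnion bad := by
      intro p hp
      simp only [hEbar, Finset.mem_filter] at hp
      obtain ⟨hpP, hne⟩ := hp
      obtain ⟨i, hi⟩ := Function.ne_iff.1 hne
      have hsub12 : p.1 ∩ Q i ⊆ p.2 ∩ Q i :=
        Finset.inter_subset_inter_right (mem_nestedPairs.1 hpP).2.2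
      simp only [Finset.mem_biUnion]
      refine ⟨i, Finset.mem_univ i, ?_⟩
      simp only [hbad, Finset.mem_filter]
      refine ⟨hpP, ?_, ?_⟩
      · intro h1'
        exact hi (by simp [outcomes, h1', h1'.mono hsub12])
      · by_contra h2'
        have h1' : ¬(p.1 ∩ Q i).Nonempty := fun h => h2' (h.mono hsub12)
        exact hi (by simp [outcomes, h1', h2'])
    calc Ebar.card ≤ (Finset.univ.biUnion bad).card := Finset.card_le_card hsub
      _ ≤ ∑ i : Fin s, (bad i).card := Finset.card_biUnion_le
  -- step 3
  have hCA : ∀ i : Fin s, C i ⊆ A i := by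
    intro i p hp
    simp only [hC, Finset.mem_filter] at hp
    simp only [hA, Finset.mem_filter]
    refine ⟨hp.1, fun h => hp.2 ?_⟩
    exact h.mono (Finset.inter_subset_inter_right (mem_nestedPairs.1 hp.1).2.2)
  have h3 : ∀ i : Fin s, ((bad i).card : ℝ) = ((A i).card : ℝ) - ((C i).card : ℝ) := by
    intro i
    have hbe : bad i = A i \ C i := by
      ext p
      simp only [hbad, hA, hC, Finset.mem_filter, Finset.mem_sdiff]
      tauto
    rw [hbe, Finset.card_sdiff_of_subset (hCA i),
      Nat.cast_sub (Finset.card_le_card (hCA i))]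
  -- combine
  have hsum : ∑ ξ : Bool,
      ((P.filter (fun p =>
          g (outcomes Q (cond ξ p.1 p.2)) (outcomes Q (cond ξ p.2 p.1)) = ξ)).card : ℝ)
        / (P.card : ℝ)
      = ((ft.card : ℝ) + (ff.card : ℝ)) / (P.card : ℝ) := by
    rw [Fintype.sum_bool, ← add_div]
    norm_num [hft, hff]
  rw [hsum]
  have key : ((ft.card : ℝ) + (ff.card : ℝ)) / (P.card : ℝ)
      ≤ 1 + ∑ i : Fin s,
          (((n - (Q i).card).choose d : ℝ) / (n.choose d : ℝ)
            - ((n - (Q i).card).choose D : ℝ) / (n.choose D : ℝ)) := by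
    have hnum : ((ft.card : ℝ) + (ff.card : ℝ))
        ≤ (P.card : ℝ) + ∑ i : Fin s, ((bad i).card : ℝ) := by
      push_cast
      have : (Ebar.card : ℝ) ≤ ∑ i : Fin s, ((bad i).card : ℝ) := by
        exact_mod_cast h2
      have h1' : (ft.card : ℝ) + (ff.card : ℝ) ≤ (P.card : ℝ) + (Ebar.card : ℝ) := by
        exact_mod_cast h1
      linarith
    calc ((ft.card : ℝ) + (ff.card : ℝ)) / (P.card : ℝ)
        ≤ ((P.card : ℝ) + ∑ i : Fin s, ((bad i).card : ℝ)) / (P.card : ℝ) := by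
          gcongr
      _ = 1 + ∑ i : Fin s, (((bad i).card : ℝ) / (P.card : ℝ)) := by
          rw [add_div, div_self hPc.ne', Finset.sum_div]
      _ = 1 + ∑ i : Fin s,
          (((n - (Q i).card).choose d : ℝ) / (n.choose d : ℝ)
            - ((n - (Q i).card).choose D : ℝ) / (n.choose D : ℝ)) := by
          congr 1
          refine Finset.sum_congr rfl (fun i _ => ?_)
          rw [h3 i, sub_div, ratio_fst hdD hDn, ratio_snd hdD hDn]
  linarith

lemma telescope_bound {N a : ℕ} (ha : 1 ≤ a) (h2aN : 2 * a ≤ N) (f : ℕ → ℝ)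
    (hf0 : ∀ k, 0 ≤ f k) (hf1 : ∀ k, k < N → f k ≤ 1) :
    ∑ k ∈ Finset.Icc a (N - a - 1), (f k - f (a + k)) ≤ a := by
  have hIcc : Finset.Icc a (N - a - 1) = Finset.Ico a (N - a) := by
    rw [← Finset.Ico_add_one_right_eq_Icc]
    congr 1
    omega
  rw [hIcc, Finset.sum_sub_distrib]
  have hre : ∑ k ∈ Finset.Ico a (N - a), f (a + k) = ∑ j ∈ Finset.Ico (2 * a) N, f j := by
    rw [show Finset.Ico (2 * a) N = (Finset.Ico a (N - a)).map (addLeftEmbedding a) by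
      rw [Finset.map_add_left_Ico]
      congr 1 <;> omega]
    rw [Finset.sum_map]
    rfl
  rw [hre]
  have hsplit : ∑ j ∈ Finset.Ico a (2 * a), f j + ∑ j ∈ Finset.Ico (2 * a) N, f j
      = ∑ j ∈ Finset.Ico a N, f j :=
    Finset.sum_Ico_consecutive f (by omega) h2aN
  have hmono : ∑ k ∈ Finset.Ico a (N - a), f k ≤ ∑ j ∈ Finset.Ico a N, f j := by
    apply Finset.sum_le_sum_of_subset_of_nonneg
    · exact Finset.Ico_subset_Ico le_rfl (by omega)
    · exact fun j _ _ => hf0 j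
  have hhead : ∑ j ∈ Finset.Ico a (2 * a), f j ≤ a := by
    calc ∑ j ∈ Finset.Ico a (2 * a), f j ≤ ∑ _j ∈ Finset.Ico a (2 * a), (1 : ℝ) := by
          apply Finset.sum_le_sum
          intro j hj
          rw [Finset.mem_Ico] at hj
          exact hf1 j (by omega)
      _ = a := by
          rw [Finset.sum_const, Nat.card_Ico, nsmul_eq_mul, mul_one]
          congr 1
          omega
  linarith

set_option maxHeartbeats 1000000 in
theorem stmt_16 (N a : ℕ) (ha : 1 ≤ a) (hN : 1 ≤ N) (s : ℕ) (hs : 0 < s)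
    (hslog : (s : ℝ) + 2 ≤
      Real.logb 2 ((2 : ℝ) ^ N) / (2000 * Real.logb 2 ((2 : ℝ) ^ a)))
    (Q : Fin s → Finset (Fin (2 ^ N)))
    (g : (Fin s → Bool) → (Fin s → Bool) → Bool) :
    (1 / ((Finset.Icc a (N - a - 1)).card : ℝ)) *
      ∑ k ∈ Finset.Icc a (N - a - 1), (1 / 2 : ℝ) *
        ∑ ξ : Bool,
          (((nestedPairs (2 ^ N) (2 ^ k) (2 ^ (a + k))).filter (fun p =>
              g (outcomes Q (cond ξ p.1 p.2)) (outcomes Q (cond ξ p.2 p.1)) = ξ)).card : ℝ)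
            / ((nestedPairs (2 ^ N) (2 ^ k) (2 ^ (a + k))).card : ℝ)
      ≤ 103 / 200 := by
  have haR : (1 : ℝ) ≤ (a : ℝ) := by exact_mod_cast ha
  have hapos : (0 : ℝ) < 2000 * (a : ℝ) := by linarith
  have hlog : (s : ℝ) + 2 ≤ (N : ℝ) / (2000 * (a : ℝ)) := by
    have e1 : Real.logb 2 ((2 : ℝ) ^ N) = N := by
      rw [Real.logb_pow, Real.logb_self_eq_one (by norm_num), mul_one]
    have e2 : Real.logb 2 ((2 : ℝ) ^ a) = a := by
      rw [Real.logb_pow, Real.logb_self_eq_one (by norm_num), mul_one]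
    rwa [e1, e2] at hslog
  have h2000 : (s + 2) * (2000 * a) ≤ N := by
    have h := (le_div_iff₀ hapos).1 hlog
    exact_mod_cast h
  have h6000 : 6000 * a ≤ N :=
    le_trans (by calc 6000 * a = 3 * (2000 * a) := by ring
                  _ ≤ (s + 2) * (2000 * a) := Nat.mul_le_mul_right _ (by omega)) h2000
  have hcard : (Finset.Icc a (N - a - 1)).card = N - 2 * a := by
    rw [Nat.card_Icc]; omega
  have hsaN : 2000 * (s * a) ≤ N - 2 * a := by
    have e : (s + 2) * (2000 * a) = 2000 * (s * a) + 4000 * a := by ring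
    rw [e] at h2000
    set m := s * a with hm
    omega
  set F : Fin s → ℕ → ℝ := fun i k =>
    (((2 ^ N) - (Q i).card).choose (2 ^ k) : ℝ) / ((2 ^ N : ℕ).choose (2 ^ k) : ℝ) with hF
  have hstep : ∀ k ∈ Finset.Icc a (N - a - 1),
      (1 / 2 : ℝ) * ∑ ξ : Bool,
          (((nestedPairs (2 ^ N) (2 ^ k) (2 ^ (a + k))).filter (fun p =>
              g (outcomes Q (cond ξ p.1 p.2)) (outcomes Q (cond ξ p.2 p.1)) = ξ)).card : ℝ)
            / ((nestedPairs (2 ^ N) (2 ^ k) (2 ^ (a + k))).card : ℝ)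
        ≤ 1 / 2 + (1 / 2) * ∑ i : Fin s, (F i k - F i (a + k)) := by
    intro k hk
    rw [Finset.mem_Icc] at hk
    exact per_k (Nat.pow_le_pow_right (by norm_num) (by omega))
      (Nat.pow_le_pow_right (by norm_num) (by omega)) Q g
  have htel : ∀ i : Fin s, ∑ k ∈ Finset.Icc a (N - a - 1), (F i k - F i (a + k)) ≤ a := by
    intro i
    apply telescope_bound ha (by omega)
    · intro k; positivity
    · intro k hk
      have hpow : (2 : ℕ) ^ k ≤ 2 ^ N := Nat.pow_le_pow_right (by norm_num) (by omega)
      have hpos : 0 < ((2 ^ N : ℕ).choose (2 ^ k) : ℝ) := by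
        exact_mod_cast Nat.choose_pos hpow
      rw [hF]
      rw [div_le_one hpos]
      exact_mod_cast Nat.choose_le_choose _ (Nat.sub_le _ _)
  have hchain : ∑ k ∈ Finset.Icc a (N - a - 1), ((1 / 2 : ℝ) *
        ∑ ξ : Bool,
          (((nestedPairs (2 ^ N) (2 ^ k) (2 ^ (a + k))).filter (fun p =>
              g (outcomes Q (cond ξ p.1 p.2)) (outcomes Q (cond ξ p.2 p.1)) = ξ)).card : ℝ)
            / ((nestedPairs (2 ^ N) (2 ^ k) (2 ^ (a + k))).card : ℝ))
      ≤ ((N - 2 * a : ℕ) : ℝ) / 2 + (1 / 2) * ((s : ℝ) * (a : ℝ)) := by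
    calc _ ≤ ∑ k ∈ Finset.Icc a (N - a - 1),
          ((1 / 2 : ℝ) + (1 / 2) * ∑ i : Fin s, (F i k - F i (a + k))) :=
          Finset.sum_le_sum hstep
      _ = ((N - 2 * a : ℕ) : ℝ) / 2 + (1 / 2) *
            ∑ i : Fin s, ∑ k ∈ Finset.Icc a (N - a - 1), (F i k - F i (a + k)) := by
          rw [Finset.sum_add_distrib, Finset.sum_const, hcard, ← Finset.mul_sum,
            Finset.sum_comm, nsmul_eq_mul]
          ring
      _ ≤ ((N - 2 * a : ℕ) : ℝ) / 2 + (1 / 2) * ((s : ℝ) * (a : ℝ)) := by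
          have : ∑ i : Fin s, ∑ k ∈ Finset.Icc a (N - a - 1), (F i k - F i (a + k))
              ≤ (s : ℝ) * (a : ℝ) := by
            calc _ ≤ ∑ _i : Fin s, (a : ℝ) := Finset.sum_le_sum (fun i _ => htel i)
              _ = (s : ℝ) * (a : ℝ) := by
                  rw [Finset.sum_const, Finset.card_univ, Fintype.card_fin, nsmul_eq_mul]
          linarith
  rw [hcard]
  have hM : (0 : ℝ) < ((N - 2 * a : ℕ) : ℝ) := by
    have : 0 < N - 2 * a := by omega
    exact_mod_cast this
  have hsaR : 2000 * ((s : ℝ) * (a : ℝ)) ≤ ((N - 2 * a : ℕ) : ℝ) := by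
    have := hsaN
    push_cast
    exact_mod_cast hsaN
  calc (1 / ((N - 2 * a : ℕ) : ℝ)) * ∑ k ∈ Finset.Icc a (N - a - 1), ((1 / 2 : ℝ) *
        ∑ ξ : Bool,
          (((nestedPairs (2 ^ N) (2 ^ k) (2 ^ (a + k))).filter (fun p =>
              g (outcomes Q (cond ξ p.1 p.2)) (outcomes Q (cond ξ p.2 p.1)) = ξ)).card : ℝ)
            / ((nestedPairs (2 ^ N) (2 ^ k) (2 ^ (a + k))).card : ℝ))
      ≤ (1 / ((N - 2 * a : ℕ) : ℝ)) *
          (((N - 2 * a : ℕ) : ℝ) / 2 + (1 / 2) * ((s : ℝ) * (a : ℝ))) := by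
        apply mul_le_mul_of_nonneg_left hchain (by positivity)
    _ ≤ 103 / 200 := by
        rw [one_div, inv_mul_le_iff₀ hM]
        linarith
end
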